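/- arXiv:1907.03024 — 2 statements merged into one kernel-verified Lean document; each statement's English description precedes it below -/
import Mathlib

section
/- Fix an integer n ≥ 2. Let f, h ∈ Homeo₊(ℝ), and suppose f has compact support. Suppose there exists a (not necessarily injective) group homomorphism φ from the subgroup of Homeo₊(ℝ) generated by BS(1,n) ∪ {f} into Homeo₊(ℝ) such that φ(γ) = γ for every γ ∈ BS(1,n) and φ(f) = h. Then either h is a translation, or for every x ∈ ℝ one has h(x) = x or h(x) = f(x). -/
open Set Topology

/-- The group of self-homeomorphisms of `X`, with `(f * g) x = f (g x)`. -/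
instance {X : Type*} [TopologicalSpace X] : Group (X ≃ₜ X) where
  mul f g := g.trans f
  one := Homeomorph.refl X
  inv := Homeomorph.symm
  mul_assoc _ _ _ := Homeomorph.ext fun _ => rfl
  one_mul _ := Homeomorph.ext fun _ => rfl
  mul_one _ := Homeomorph.ext fun _ => rfl
  inv_mul_cancel f := Homeomorph.ext fun x => f.symm_apply_apply x

/-- The support of a homeomorphism: the closure of the set of non-fixed points. -/
def Supp (f : ℝ ≃ₜ ℝ) : Set ℝ := closure {x | f x ≠ x}

namespace BSR

abbrev HH := ℝ ≃ₜ ℝ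

lemma mul_app (g₁ g₂ : HH) (x : ℝ) : (g₁ * g₂) x = g₁ (g₂ x) := rfl
lemma one_app (x : ℝ) : (1 : HH) x = x := rfl
lemma inv_app (g : HH) (x : ℝ) : (g⁻¹) x = g.symm x := rfl
lemma inv_apply_apply (g : HH) (x : ℝ) : g⁻¹ (g x) = x := g.symm_apply_apply x
lemma apply_inv_apply (g : HH) (x : ℝ) : g (g⁻¹ x) = x := g.apply_symm_apply x

lemma ext_iff' {g₁ g₂ : HH} : g₁ = g₂ ↔ ∀ x, g₁ x = g₂ x :=
  ⟨fun h x => by rw [h], fun h => Homeomorph.ext h⟩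

/-- moved set -/
def Mv (g : HH) : Set ℝ := {x | g x ≠ x}

lemma supp_def (g : HH) : Supp g = closure (Mv g) := rfl

lemma isClosed_supp (g : HH) : IsClosed (Supp g) := isClosed_closure

lemma mv_subset_supp (g : HH) : Mv g ⊆ Supp g := subset_closure

lemma fix_of_not_mem_supp {g : HH} {x : ℝ} (hx : x ∉ Supp g) : g x = x := by
  by_contra hne
  exact hx (subset_closure hne)

lemma eq_one_of_supp_empty {g : HH} (hs : Supp g = ∅) : g = 1 := by
  refine Homeomorph.ext fun x => ?_
  have : x ∉ Supp g := by rw [hs]; exact notMem_empty x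
  exact fix_of_not_mem_supp this

lemma mv_apply_mem {g : HH} {x : ℝ} : g x ∈ Mv g ↔ x ∈ Mv g := by
  simp only [Mv, mem_setOf_eq]
  constructor
  · intro h hc
    exact h (by rw [hc]; exact hc)
  · intro h hc
    exact h (g.injective hc)

lemma image_mv (g : HH) : g '' Mv g = Mv g := by
  ext y
  constructor
  · rintro ⟨x, hx, rfl⟩
    exact mv_apply_mem.2 hx
  · intro hy
    refine ⟨g⁻¹ y, ?_, apply_inv_apply g y⟩
    have : g (g⁻¹ y) ∈ Mv g := by rw [apply_inv_apply]; exact hy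
    exact mv_apply_mem.1 this

lemma image_supp_self (g : HH) : g '' Supp g = Supp g := by
  rw [supp_def, Homeomorph.image_closure, image_mv]

lemma mem_supp_apply {g : HH} {x : ℝ} (hx : x ∈ Supp g) : g x ∈ Supp g := by
  rw [← image_supp_self g]; exact mem_image_of_mem _ hx

lemma supp_conj (k g : HH) : Supp (k * g * k⁻¹) = k '' Supp g := by
  have hmv : Mv (k * g * k⁻¹) = k '' Mv g := by
    ext x
    simp only [Mv, mem_setOf_eq, mem_image, mul_app]
    constructor
    · intro hx
      refine ⟨k⁻¹ x, fun hc => hx ?_, apply_inv_apply k x⟩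
      rw [inv_app] at hc ⊢
      rw [hc, k.apply_symm_apply]
    · rintro ⟨y, hy, rfl⟩
      rw [inv_apply_apply]
      exact fun hc => hy (k.injective hc)
  rw [supp_def, supp_def, hmv, Homeomorph.image_closure]

lemma supp_inv (g : HH) : Supp g⁻¹ = Supp g := by
  have hmv : Mv g⁻¹ = Mv g := by
    ext x
    simp only [Mv, mem_setOf_eq, inv_app]
    constructor
    · intro hx hc
      refine hx ?_
      calc g.symm x = g.symm (g x) := by rw [hc]
        _ = x := g.symm_apply_apply x
    · intro hx hc
      refine hx ?_
      calc g x = g (g.symm x) := by rw [hc]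
        _ = x := g.apply_symm_apply x
  rw [supp_def, supp_def, hmv]

lemma supp_mul_subset (g₁ g₂ : HH) : Supp (g₁ * g₂) ⊆ Supp g₁ ∪ Supp g₂ := by
  rw [supp_def]
  refine closure_minimal ?_ ((isClosed_supp g₁).union (isClosed_supp g₂))
  intro x hx
  by_contra hx'
  rw [mem_union] at hx'
  push_neg at hx'
  have h2 : g₂ x = x := fix_of_not_mem_supp hx'.2
  have h1 : g₁ x = x := fix_of_not_mem_supp hx'.1
  exact hx (by rw [mul_app, h2, h1])

lemma commute_of_disjoint_supp {g₁ g₂ : HH} (hd : Disjoint (Supp g₁) (Supp g₂)) :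
    g₁ * g₂ = g₂ * g₁ := by
  refine Homeomorph.ext fun x => ?_
  rw [mul_app, mul_app]
  by_cases h1 : x ∈ Supp g₁
  · have h2 : x ∉ Supp g₂ := fun h => (hd.le_bot ⟨h1, h⟩ : x ∈ (∅ : Set ℝ))
    have h2' : g₁ x ∉ Supp g₂ := fun h => (hd.le_bot ⟨mem_supp_apply h1, h⟩ : _ ∈ (∅ : Set ℝ))
    rw [fix_of_not_mem_supp h2, fix_of_not_mem_supp h2']
  · by_cases h2 : x ∈ Supp g₂
    · have h1' : g₂ x ∉ Supp g₁ := fun h => (hd.le_bot ⟨h, mem_supp_apply h2⟩ : _ ∈ (∅ : Set ℝ))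
      rw [fix_of_not_mem_supp h1, fix_of_not_mem_supp h1']
    · rw [fix_of_not_mem_supp h2, fix_of_not_mem_supp h1, fix_of_not_mem_supp h2]

lemma pcomm_of_mul_eq {g k : HH} (h : g * k = k * g) (x : ℝ) : g (k x) = k (g x) := by
  have := ext_iff'.1 h x
  rw [mul_app, mul_app] at this
  exact this

lemma fix_map_of_comm {g k : HH} (h : g * k = k * g) {x : ℝ} (hx : g x = x) :
    g (k x) = k x := by rw [pcomm_of_mul_eq h, hx]

lemma conj_eq_of_comm {g k : HH} (h : g * k = k * g) : k * g * k⁻¹ = g := by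
  rw [← h, mul_assoc, mul_inv_cancel, mul_one]

lemma supp_nonempty_of_ne_one {g : HH} (hg : g ≠ 1) : (Supp g).Nonempty := by
  rcases eq_empty_or_nonempty (Supp g) with h | h
  · exact absurd (eq_one_of_supp_empty h) hg
  · exact h

/-- The key displacement certificate: a nontrivial element cannot commute with
something that moves its support entirely off itself. -/
lemma certificate {g₁ g₂ : HH} (hne : g₁ ≠ 1) (hc : g₁ * g₂ = g₂ * g₁)
    (hd : Disjoint (g₂ '' Supp g₁) (Supp g₁)) : False := by
  have h1 : g₂ * g₁ * g₂⁻¹ = g₁ := conj_eq_of_comm hc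
  have h2 : g₂ '' Supp g₁ = Supp g₁ := by rw [← supp_conj g₂ g₁, h1]
  obtain ⟨x, hx⟩ := supp_nonempty_of_ne_one hne
  exact (hd.le_bot ⟨h2.symm ▸ hx, hx⟩ : x ∈ (∅ : Set ℝ))

/-- A continuous nowhere-zero function on ℝ has constant sign. -/
lemma sign_const {d : ℝ → ℝ} (hd : Continuous d) (h0 : ∀ x, d x ≠ 0) :
    (∀ x, 0 < d x) ∨ (∀ x, d x < 0) := by
  by_cases hp : ∀ x, 0 < d x
  · exact Or.inl hp
  · push_neg at hp
    obtain ⟨x₀, hx₀⟩ := hp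
    have hx₀' : d x₀ < 0 := lt_of_le_of_ne hx₀ (h0 x₀)
    refine Or.inr fun x => ?_
    by_contra hx
    push_neg at hx
    have hx' : 0 < d x := lt_of_le_of_ne hx (Ne.symm (h0 x))
    rcases le_total x x₀ with hle | hle
    · obtain ⟨z, _, hz⟩ := intermediate_value_Icc' hle hd.continuousOn
        (⟨hx₀'.le, hx'.le⟩ : (0:ℝ) ∈ Icc (d x₀) (d x))
      exact h0 z hz
    · obtain ⟨z, _, hz⟩ := intermediate_value_Icc hle hd.continuousOn
        (⟨hx₀'.le, hx'.le⟩ : (0:ℝ) ∈ Icc (d x₀) (d x))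
      exact h0 z hz

/-- inverses reverse pointwise strict order of homeomorphisms -/
lemma inv_lt_pointwise {p q : HH} (hq : StrictMono q) (h : ∀ x, q x < p x) :
    ∀ x, p⁻¹ x < q⁻¹ x := by
  intro x
  by_contra hc
  push_neg at hc
  have h1 : q (q⁻¹ x) ≤ q (p⁻¹ x) := hq.monotone (by exact_mod_cast hc)
  rw [apply_inv_apply] at h1
  have h2 : q (p⁻¹ x) < p (p⁻¹ x) := h _
  rw [apply_inv_apply] at h2
  exact absurd (lt_of_le_of_lt h1 h2) (lt_irrefl x)

lemma strictMono_inv {p : HH} (hp : StrictMono p) : StrictMono (p⁻¹ : HH) := by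
  intro a b hab
  by_contra hc
  push_neg at hc
  have := hp.monotone hc
  rw [apply_inv_apply, apply_inv_apply] at this
  exact absurd this (not_le.2 hab)

end BSR
/-- The homeomorphism `x ↦ n·x` of `ℝ`. -/
noncomputable def dilation (n : ℕ) (hn : 2 ≤ n) : ℝ ≃ₜ ℝ :=
  Homeomorph.mulLeft₀ (n : ℝ) (by positivity)

/-- The homeomorphism `x ↦ x + t` of `ℝ`. -/
noncomputable def translation (t : ℝ) : ℝ ≃ₜ ℝ := Homeomorph.addRight t

/-- The standard affine Baumslag–Solitar group `BS(1,n)`, generated by `x ↦ n·x`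
and `x ↦ x + 1`, as a subgroup of the homeomorphism group of `ℝ`. -/
noncomputable def BSgroup (n : ℕ) (hn : 2 ≤ n) : Subgroup (ℝ ≃ₜ ℝ) :=
  Subgroup.closure {dilation n hn, translation 1}

namespace BSRB
open BSR

variable {n : ℕ} {hn : 2 ≤ n}

lemma n_pos (hn : 2 ≤ n) : (0:ℝ) < n := by
  have : (2:ℝ) ≤ n := by exact_mod_cast hn
  linarith

lemma one_lt_n (hn : 2 ≤ n) : (1:ℝ) < n := by
  have : (2:ℝ) ≤ n := by exact_mod_cast hn
  linarith

lemma n_ne (hn : 2 ≤ n) : (n:ℝ) ≠ 0 := ne_of_gt (n_pos hn)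

lemma dilation_app (n : ℕ) (hn : 2 ≤ n) (x : ℝ) : dilation n hn x = n * x := rfl

lemma translation_app (t x : ℝ) : translation t x = x + t := rfl

lemma dilation_inv_app (n : ℕ) (hn : 2 ≤ n) (x : ℝ) :
    ((dilation n hn)⁻¹ : HH) x = x / n := by
  have h := apply_inv_apply (dilation n hn) x
  rw [dilation_app] at h
  rw [eq_div_iff (n_ne hn)]
  linarith

lemma translation_inv_app (t x : ℝ) : ((translation t)⁻¹ : HH) x = x - t := by
  have h := apply_inv_apply (translation t) x
  rw [translation_app] at h
  linarith

lemma dil_zpow (n : ℕ) (hn : 2 ≤ n) (k : ℤ) :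
    ∀ x : ℝ, ((dilation n hn)^k : HH) x = (n:ℝ)^k * x := by
  induction k using Int.induction_on with
  | zero => intro x; rw [zpow_zero, zpow_zero, one_app, one_mul]
  | succ i ih =>
    intro x
    rw [zpow_add_one, mul_app, dilation_app, ih, zpow_add_one₀ (n_ne hn)]
    ring
  | pred i ih =>
    intro x
    rw [zpow_sub_one, mul_app, dilation_inv_app, ih, zpow_sub_one₀ (n_ne hn)]
    field_simp
    try ring

lemma tr_zpow (p : ℤ) : ∀ x : ℝ, ((translation 1)^p : HH) x = x + p := by
  induction p using Int.induction_on with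
  | zero => intro x; rw [zpow_zero, one_app]; norm_num
  | succ i ih =>
    intro x
    rw [zpow_add_one, mul_app, translation_app, ih]
    push_cast; ring
  | pred i ih =>
    intro x
    rw [zpow_sub_one, mul_app, translation_inv_app, ih]
    push_cast; ring

/-- the affine homeomorphism `x ↦ l x + s`. -/
noncomputable def aff (l s : ℝ) (hl : 0 < l) : HH :=
  (Homeomorph.mulLeft₀ l (ne_of_gt hl)).trans (Homeomorph.addRight s)

lemma aff_app (l s : ℝ) (hl : 0 < l) (x : ℝ) : aff l s hl x = l * x + s := rfl

lemma aff_strictMono (l s : ℝ) (hl : 0 < l) : StrictMono (aff l s hl) := by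
  intro a b hab
  rw [aff_app, aff_app]
  nlinarith

lemma aff_inv_app (l s : ℝ) (hl : 0 < l) (x : ℝ) :
    ((aff l s hl)⁻¹ : HH) x = (x - s) / l := by
  have h := apply_inv_apply (aff l s hl) x
  rw [aff_app] at h
  rw [eq_div_iff (ne_of_gt hl)]
  linarith

/-- dyadic rationals (base n) -/
def Dy (n : ℕ) (s : ℝ) : Prop := ∃ (p : ℤ) (m : ℕ), s = (p:ℝ) / (n:ℝ)^m

/-- powers of n -/
def DyL (n : ℕ) (l : ℝ) : Prop := ∃ j : ℤ, l = (n:ℝ)^j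

lemma dy_int (k : ℤ) : Dy n (k:ℝ) := ⟨k, 0, by simp⟩

lemma dyL_one : DyL n (1:ℝ) := ⟨0, by simp⟩

lemma dyL_n (hn : 2 ≤ n) : DyL n (n:ℝ) := ⟨1, by simp⟩

lemma dyL_pos (hn : 2 ≤ n) {l : ℝ} (hl : DyL n l) : 0 < l := by
  obtain ⟨j, rfl⟩ := hl
  exact zpow_pos (n_pos hn) j

/-- the affine map with dyadic data is in BS(1,n) -/
lemma aff_mem (n : ℕ) (hn : 2 ≤ n) (j : ℤ) (p : ℤ) (m : ℕ) (hl : 0 < ((n:ℝ)^j)) :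
    aff ((n:ℝ)^j) ((p:ℝ) / (n:ℝ)^m) hl ∈ BSgroup n hn := by
  have hd : dilation n hn ∈ BSgroup n hn :=
    Subgroup.subset_closure (Set.mem_insert _ _)
  have ht : translation 1 ∈ BSgroup n hn :=
    Subgroup.subset_closure (Set.mem_insert_of_mem _ rfl)
  have key : aff ((n:ℝ)^j) ((p:ℝ) / (n:ℝ)^m) hl =
      (dilation n hn)^(-(m:ℤ)) * (translation 1)^p * (dilation n hn)^((m:ℤ)+j) := by
    refine Homeomorph.ext fun x => ?_
    rw [aff_app, mul_app, mul_app, dil_zpow, tr_zpow, dil_zpow]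
    have h1 : ((n:ℝ)^(-(m:ℤ))) = ((n:ℝ)^(m:ℤ))⁻¹ := by rw [zpow_neg]
    have h2 : ((n:ℝ)^((m:ℤ)+j)) = (n:ℝ)^(m:ℤ) * (n:ℝ)^j := by rw [zpow_add₀ (n_ne hn)]
    have h3 : ((n:ℝ)^(m:ℤ)) = (n:ℝ)^m := by norm_cast
    have hNpos : (0:ℝ) < (n:ℝ)^(m:ℤ) := zpow_pos (n_pos hn) _
    rw [h1, h2, h3]
    field_simp
  rw [key]
  exact mul_mem (mul_mem (zpow_mem hd _) (zpow_mem ht _)) (zpow_mem hd _)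

lemma exists_pow_gt (hn : 2 ≤ n) (R : ℝ) : ∃ m : ℕ, R < (n:ℝ)^m := by
  obtain ⟨m, hm⟩ := pow_unbounded_of_one_lt R (one_lt_n hn)
  exact ⟨m, hm⟩

/-- density of dyadics -/
lemma dy_dense (hn : 2 ≤ n) {x y : ℝ} (h : x < y) : ∃ s : ℝ, Dy n s ∧ x < s ∧ s < y := by
  obtain ⟨m, hm⟩ := exists_pow_gt hn ((y - x)⁻¹)
  set N : ℝ := (n:ℝ)^m with hN
  have hNpos : 0 < N := by positivity
  have h1 : 1 < (y - x) * N := by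
    have h2 : (y - x) * ((y-x)⁻¹) < (y - x) * N := by
      exact mul_lt_mul_of_pos_left hm (by linarith)
    rw [mul_inv_cancel₀ (by linarith : y - x ≠ 0)] at h2
    exact h2
  refine ⟨((⌊x * N⌋ : ℤ) + 1) / N, ⟨⌊x * N⌋ + 1, m, by push_cast; rfl⟩, ?_, ?_⟩
  · rw [lt_div_iff₀ hNpos]
    have := Int.lt_floor_add_one (x * N)
    push_cast
    linarith
  · rw [div_lt_iff₀ hNpos]
    have := Int.floor_le (x * N)
    push_cast
    nlinarith

lemma dyL_small (hn : 2 ≤ n) (ε : ℝ) (hε : 0 < ε) :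
    ∃ l : ℝ, DyL n l ∧ 0 < l ∧ l < ε := by
  obtain ⟨m, hm⟩ := exists_pow_gt hn (ε⁻¹)
  refine ⟨(n:ℝ)^(-(m:ℤ)), ⟨-(m:ℤ), rfl⟩, zpow_pos (n_pos hn) _, ?_⟩
  rw [zpow_neg]
  have h3 : ((n:ℝ)^(m:ℤ)) = (n:ℝ)^m := by norm_cast
  rw [h3]
  have hNpos : (0:ℝ) < (n:ℝ)^m := by positivity
  rw [inv_lt_comm₀ hNpos hε]
  exact hm

lemma dyL_large (hn : 2 ≤ n) (R : ℝ) : ∃ l : ℝ, DyL n l ∧ 1 ≤ l ∧ R < l := by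
  obtain ⟨m, hm⟩ := exists_pow_gt hn R
  refine ⟨(n:ℝ)^(m:ℤ), ⟨(m:ℤ), rfl⟩, ?_, ?_⟩
  · have h3 : ((n:ℝ)^(m:ℤ)) = (n:ℝ)^m := by norm_cast
    rw [h3]
    exact one_le_pow₀ (by linarith [one_lt_n hn])
  · have h3 : ((n:ℝ)^(m:ℤ)) = (n:ℝ)^m := by norm_cast
    rw [h3]; exact hm

end BSRB
namespace BSRC
open BSR BSRB Set

variable {n : ℕ}

lemma comm_conj_inv {g u : HH} (h : g * (u*g*u⁻¹) = (u*g*u⁻¹) * g) :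
    g⁻¹ * (u*g⁻¹*u⁻¹) = (u*g⁻¹*u⁻¹) * g⁻¹ := by
  have h1 : (u*g*u⁻¹)⁻¹ = u * g⁻¹ * u⁻¹ := by
    simp [mul_inv_rev, mul_assoc]
  have h2 : g⁻¹ * (u*g*u⁻¹)⁻¹ = (u*g*u⁻¹)⁻¹ * g⁻¹ := by
    have e1 : ((u*g*u⁻¹) * g)⁻¹ = g⁻¹ * (u*g*u⁻¹)⁻¹ := mul_inv_rev _ _
    have e2 : (g * (u*g*u⁻¹))⁻¹ = (u*g*u⁻¹)⁻¹ * g⁻¹ := mul_inv_rev _ _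
    rw [← e1, ← e2, h]
  rw [h1] at h2
  exact h2

lemma conj_fix_point {u g : HH} {w : ℝ} (hw : g w = w) : (u*g*u⁻¹) (u w) = u w := by
  rw [mul_app, mul_app, inv_apply_apply, hw]

lemma conj_app (u g : HH) (y : ℝ) : (u*g*u⁻¹) y = u (g (u⁻¹ y)) := by
  rw [mul_app, mul_app]

lemma conj_fix_point_inv {u g : HH} {y : ℝ} (hy : (u*g*u⁻¹) y = y) :
    g (u⁻¹ y) = u⁻¹ y := by
  have h : u (g (u⁻¹ y)) = y := by rw [← conj_app]; exact hy
  calc g (u⁻¹ y) = u⁻¹ (u (g (u⁻¹ y))) := (inv_apply_apply u _).symm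
    _ = u⁻¹ y := by rw [h]

lemma lt_inv_app {u : HH} (hu : StrictMono u) {a b : ℝ} : a < u⁻¹ b ↔ u a < b := by
  constructor
  · intro h
    have := hu h
    rwa [apply_inv_apply] at this
  · intro h
    have := (strictMono_inv hu) h
    rwa [inv_apply_apply] at this

lemma inv_lt_app {u : HH} (hu : StrictMono u) {a b : ℝ} : u⁻¹ b < a ↔ b < u a := by
  constructor
  · intro h
    have := hu h
    rwa [apply_inv_apply] at this
  · intro h
    have := (strictMono_inv hu) h
    rwa [inv_apply_apply] at this

/-- place a compact interval into a small window around `c` by a dyadic affine map -/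
lemma exists_aff_into (n : ℕ) (hn : 2 ≤ n) (R c δ : ℝ) (hR : 0 < R) (hδ : 0 < δ) :
    ∃ (l s : ℝ) (hl : 0 < l), DyL n l ∧ Dy n s ∧
      ∀ x : ℝ, |x| ≤ R → |l * x + s - c| < δ := by
  obtain ⟨l, hdyl, hlpos, hlsm⟩ := dyL_small hn (δ / (2*(R+1))) (by positivity)
  obtain ⟨s, hdys, hs1, hs2⟩ := dy_dense hn (show c - l < c + l by linarith)
  refine ⟨l, s, hlpos, hdyl, hdys, fun x hx => ?_⟩
  have h1 : |l * x| ≤ l * R := by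
    rw [abs_mul, abs_of_pos hlpos]
    exact mul_le_mul_of_nonneg_left hx hlpos.le
  have h2 : |s - c| < l := abs_sub_lt_iff.2 ⟨by linarith, by linarith⟩
  have h3 : |l * x + s - c| ≤ |l * x| + |s - c| := by
    have := abs_add_le (l * x) (s - c)
    calc |l * x + s - c| = |l * x + (s - c)| := by ring_nf
      _ ≤ |l * x| + |s - c| := abs_add_le _ _
  have h4 : l * R + l < δ := by
    have : l * (2*(R+1)) < δ / (2*(R+1)) * (2*(R+1)) := by
      exact mul_lt_mul_of_pos_right hlsm (by positivity)
    rw [div_mul_cancel₀ _ (by positivity : (2*(R+1) : ℝ) ≠ 0)] at this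
    nlinarith
  linarith

/-- a dyadic affine stretch anchored near β mapping the gap across itself,
sending far-from-β points out of [-R,R]. -/
lemma exists_aff_stretch_right (n : ℕ) (hn : 2 ≤ n) (R α β : ℝ) (hαβ : α < β) :
    ∃ (l s : ℝ) (hl : 0 < l), DyL n l ∧ Dy n s ∧
      α < l * β + s ∧ l * β + s < β ∧ l * α + s ≤ α ∧
      ∀ x : ℝ, 2 ≤ |x - β| → R < |l * x + s| := by
  obtain ⟨l, hdyl, hl1, hlbig⟩ := dyL_large hn ((R + |α| + |β| + 1) / 2)
  have hlpos : 0 < l := lt_of_lt_of_le one_pos hl1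
  obtain ⟨s, hdys, hs1, hs2⟩ := dy_dense hn (show α - l*β < β - l*β by linarith)
  refine ⟨l, s, hlpos, hdyl, hdys, by linarith, by linarith, ?_, ?_⟩
  · nlinarith
  · intro x hx
    set p := l * β + s with hp
    have hpb : |p| ≤ |α| + |β| := by
      rw [abs_le]
      constructor
      · have := neg_abs_le α; linarith [abs_nonneg β]
      · have := le_abs_self β; linarith [abs_nonneg α]
    have hdist : |l * x + s - p| = l * |x - β| := by
      rw [hp]
      have : l * x + s - (l * β + s) = l * (x - β) := by ring
      rw [this, abs_mul, abs_of_pos hlpos]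
    have h5 : 2 * l ≤ l * |x - β| := by
      nlinarith
    have h6 : R + |α| + |β| + 1 < 2 * l := by nlinarith
    have h7 : |l * x + s - p| ≤ |l * x + s| + |p| := by
      calc |l * x + s - p| = |(l*x+s) + (-p)| := by ring_nf
        _ ≤ |l*x+s| + |(-p)| := abs_add_le _ _
        _ = |l*x+s| + |p| := by rw [abs_neg]
    rw [hdist] at h7
    linarith

/-- mirror: anchored near α. -/
lemma exists_aff_stretch_left (n : ℕ) (hn : 2 ≤ n) (R α β : ℝ) (hαβ : α < β) :
    ∃ (l s : ℝ) (hl : 0 < l), DyL n l ∧ Dy n s ∧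
      α < l * α + s ∧ l * α + s < β ∧ β ≤ l * β + s ∧
      ∀ x : ℝ, 2 ≤ |x - α| → R < |l * x + s| := by
  obtain ⟨l, hdyl, hl1, hlbig⟩ := dyL_large hn ((R + |α| + |β| + 1) / 2)
  have hlpos : 0 < l := lt_of_lt_of_le one_pos hl1
  obtain ⟨s, hdys, hs1, hs2⟩ := dy_dense hn (show α - l*α < β - l*α by linarith)
  refine ⟨l, s, hlpos, hdyl, hdys, by linarith, by linarith, ?_, ?_⟩
  · nlinarith
  · intro x hx
    set p := l * α + s with hp
    have hpb : |p| ≤ |α| + |β| := by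
      rw [abs_le]
      constructor
      · have := neg_abs_le α; linarith [abs_nonneg β]
      · have := le_abs_self β; linarith [abs_nonneg α]
    have hdist : |l * x + s - p| = l * |x - α| := by
      rw [hp]
      have : l * x + s - (l * α + s) = l * (x - α) := by ring
      rw [this, abs_mul, abs_of_pos hlpos]
    have h5 : 2 * l ≤ l * |x - α| := by nlinarith
    have h6 : R + |α| + |β| + 1 < 2 * l := by nlinarith
    have h7 : |l * x + s - p| ≤ |l * x + s| + |p| := by
      calc |l * x + s - p| = |(l*x+s) + (-p)| := by ring_nf
        _ ≤ |l*x+s| + |(-p)| := abs_add_le _ _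
        _ = |l*x+s| + |p| := by rw [abs_neg]
    rw [hdist] at h7
    linarith

/-- a window around an up-moved point, pushed entirely above itself. -/
lemma moved_window (g : HH) {x₀ : ℝ} (hx₀ : x₀ < g x₀) (D : ℝ) (hD : 0 < D) :
    ∃ δ : ℝ, 0 < δ ∧ δ ≤ D ∧ ∀ y : ℝ, |y - x₀| ≤ δ → x₀ + δ < g y := by
  set ε₀ := (g x₀ - x₀) / 3 with hε₀
  have hε₀pos : 0 < ε₀ := by rw [hε₀]; linarith
  have hcont : ContinuousAt (⇑g) x₀ := g.continuous.continuousAt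
  rw [Metric.continuousAt_iff] at hcont
  obtain ⟨δ₂, hδ₂pos, hδ₂⟩ := hcont ε₀ hε₀pos
  refine ⟨min (min (δ₂/2) ε₀) D, by positivity, min_le_right _ _, ?_⟩
  intro y hy
  set δ := min (min (δ₂/2) ε₀) D with hδ
  have hδle : δ ≤ ε₀ := le_trans (min_le_left _ _) (min_le_right _ _)
  have hδle2 : δ ≤ δ₂/2 := le_trans (min_le_left _ _) (min_le_left _ _)
  have hyd : dist y x₀ < δ₂ := by
    rw [Real.dist_eq]
    calc |y - x₀| ≤ δ := hy
      _ ≤ δ₂/2 := hδle2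
      _ < δ₂ := by linarith
  have := hδ₂ hyd
  rw [Real.dist_eq, abs_lt] at this
  have : g x₀ - ε₀ < g y := by linarith [this.1]
  have hgx₀ : g x₀ = x₀ + 3 * ε₀ := by rw [hε₀]; ring
  calc x₀ + δ ≤ x₀ + ε₀ := by linarith
    _ < g y := by rw [hgx₀] at this; linarith

end BSRC
namespace BSRC
open BSR BSRB Set

/-- the commutation hypothesis package -/
def CommHyp (n : ℕ) (B : Set ℝ) (g : HH) : Prop :=
  ∀ (l s : ℝ) (hl : 0 < l), DyL n l → Dy n s →
    (∀ b ∈ B, (l * b + s) ∉ B) →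
    g * (aff l s hl * g * (aff l s hl)⁻¹) = (aff l s hl * g * (aff l s hl)⁻¹) * g

lemma commHyp_inv {n : ℕ} {B : Set ℝ} {g : HH} (h : CommHyp n B g) : CommHyp n B g⁻¹ :=
  fun l s hl h1 h2 h3 => comm_conj_inv (h l s hl h1 h2 h3)

lemma inv_fix {g : HH} {x : ℝ} (hx : g x = x) : (g⁻¹ : HH) x = x := by
  calc (g⁻¹ : HH) x = g⁻¹ (g x) := by rw [hx]
    _ = x := inv_apply_apply g x

lemma fix_of_inv_fix {g : HH} {x : ℝ} (hx : (g⁻¹ : HH) x = x) : g x = x := by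
  have := inv_fix (g := g⁻¹) hx
  rwa [inv_inv] at this

lemma cert_right (n : ℕ) (hn : 2 ≤ n) (R : ℝ) (B : Set ℝ) (hBsub : ∀ b ∈ B, |b| ≤ R)
    (g : HH) (hg : StrictMono g) (hyp : CommHyp n B g)
    (α β : ℝ) (hαβ : α < β) (hα : g α = α) (hβ : g β = β)
    (hsign : ∀ w, α < w → w < β → g w < w)
    (hfar : ∀ b ∈ B, 2 ≤ |b - β|) : False := by
  obtain ⟨l, s, hl, hdyl, hdys, h1, h2, h3, h4⟩ := exists_aff_stretch_right n hn R α β hαβ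
  set u := aff l s hl with hu
  have hum : StrictMono u := aff_strictMono l s hl
  have hadm : ∀ b ∈ B, (l * b + s) ∉ B := fun b hb hmem =>
    absurd (hBsub _ hmem) (not_le.2 (h4 b (hfar b hb)))
  have hcomm := hyp l s hl hdyl hdys hadm
  set W := u * g * u⁻¹ with hW
  have hup : u β = l * β + s := aff_app l s hl β
  have hgp : g (u β) < u β := by rw [hup]; exact hsign _ h1 h2
  have hgpα : α < g (u β) := by
    have h5 : α < u β := by rw [hup]; exact h1
    have := hg h5
    rwa [hα] at this
  have hWp : W (u β) = u β := conj_fix_point hβ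
  have hWgp : W (g (u β)) = g (u β) := by
    have hpc := pcomm_of_mul_eq hcomm (u β)
    rw [hWp] at hpc
    exact hpc.symm
  have hw'fix : g (u⁻¹ (g (u β))) = u⁻¹ (g (u β)) := conj_fix_point_inv hWgp
  have hw'1 : α < u⁻¹ (g (u β)) := by
    rw [lt_inv_app hum]
    calc u α = l * α + s := aff_app l s hl α
      _ ≤ α := h3
      _ < g (u β) := hgpα
  have hw'2 : u⁻¹ (g (u β)) < β := by
    rw [inv_lt_app hum]
    exact hgp
  exact (ne_of_lt (hsign _ hw'1 hw'2)) hw'fix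

lemma cert_left (n : ℕ) (hn : 2 ≤ n) (R : ℝ) (B : Set ℝ) (hBsub : ∀ b ∈ B, |b| ≤ R)
    (g : HH) (hg : StrictMono g) (hyp : CommHyp n B g)
    (α β : ℝ) (hαβ : α < β) (hα : g α = α) (hβ : g β = β)
    (hsign : ∀ w, α < w → w < β → w < g w)
    (hfar : ∀ b ∈ B, 2 ≤ |b - α|) : False := by
  obtain ⟨l, s, hl, hdyl, hdys, h1, h2, h3, h4⟩ := exists_aff_stretch_left n hn R α β hαβ
  set u := aff l s hl with hu
  have hum : StrictMono u := aff_strictMono l s hl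
  have hadm : ∀ b ∈ B, (l * b + s) ∉ B := fun b hb hmem =>
    absurd (hBsub _ hmem) (not_le.2 (h4 b (hfar b hb)))
  have hcomm := hyp l s hl hdyl hdys hadm
  set W := u * g * u⁻¹ with hW
  have hup : u α = l * α + s := aff_app l s hl α
  have hgp : u α < g (u α) := by rw [hup]; exact hsign _ h1 h2
  have hgpβ : g (u α) < β := by
    have h5 : u α < β := by rw [hup]; exact h2
    have := hg h5
    rwa [hβ] at this
  have hWp : W (u α) = u α := conj_fix_point hα
  have hWgp : W (g (u α)) = g (u α) := by
    have hpc := pcomm_of_mul_eq hcomm (u α)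
    rw [hWp] at hpc
    exact hpc.symm
  have hw'fix : g (u⁻¹ (g (u α))) = u⁻¹ (g (u α)) := conj_fix_point_inv hWgp
  have hw'1 : α < u⁻¹ (g (u α)) := by
    rw [lt_inv_app hum]
    exact hgp
  have hw'2 : u⁻¹ (g (u α)) < β := by
    rw [inv_lt_app hum]
    calc g (u α) < β := hgpβ
      _ ≤ l * β + s := h3
      _ = u β := (aff_app l s hl β).symm
  exact (ne_of_lt (hsign _ hw'1 hw'2)).symm hw'fix

lemma fix_not_bddAbove (n : ℕ) (hn : 2 ≤ n) (R : ℝ) (B : Set ℝ)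
    (hBsub : ∀ b ∈ B, |b| ≤ R)
    (g : HH) (hg : StrictMono g) (hyp : CommHyp n B g)
    (x₀ δ₀ : ℝ) (hδ₀ : 0 < δ₀)
    (hwinB : ∀ y : ℝ, |y - x₀| ≤ δ₀ → y ∉ B)
    (hwinup : ∀ y : ℝ, |y - x₀| ≤ δ₀ → x₀ + δ₀ < g y)
    (q : ℝ) (hq : g q = q) : ¬ BddAbove {x : ℝ | g x = x} := by
  intro hbdd
  set F := {x : ℝ | g x = x} with hF
  have hFne : F.Nonempty := ⟨q, hq⟩
  have hFcl : IsClosed F := isClosed_eq g.continuous continuous_id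
  set x' := sSup F with hx'
  have hx'F : g x' = x' := hFcl.csSup_mem hFne hbdd
  have hRmax : (0:ℝ) ≤ max R |x'| := le_trans (abs_nonneg x') (le_max_right _ _)
  obtain ⟨l, s, hl, hdyl, hdys, hplace⟩ :=
    exists_aff_into n hn (max R |x'| + 1) x₀ δ₀ (by linarith) hδ₀
  set u := aff l s hl with hu
  have hum : StrictMono u := aff_strictMono l s hl
  have hadm : ∀ b ∈ B, (l * b + s) ∉ B := by
    intro b hb
    have hbR : |b| ≤ max R |x'| + 1 := le_trans (hBsub b hb)
      (by linarith [le_max_left R |x'|])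
    exact hwinB _ (le_of_lt (hplace b hbR))
  have hcomm := hyp l s hl hdyl hdys hadm
  set W := u * g * u⁻¹ with hW
  have hpwin : |u x' - x₀| ≤ δ₀ := by
    have : u x' = l * x' + s := aff_app l s hl x'
    rw [this]
    exact le_of_lt (hplace x' (by linarith [le_max_right R |x'|]))
  have hWp : W (u x') = u x' := conj_fix_point hx'F
  have hgp : u x' < g (u x') := by
    have h := hwinup _ hpwin
    have h2 : u x' ≤ x₀ + δ₀ := by
      have := (abs_le.1 hpwin).2
      linarith
    linarith
  have hWgp : W (g (u x')) = g (u x') := by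
    have hpc := pcomm_of_mul_eq hcomm (u x')
    rw [hWp] at hpc
    exact hpc.symm
  have hw'fix : g (u⁻¹ (g (u x'))) = u⁻¹ (g (u x')) := conj_fix_point_inv hWgp
  have hw'gt : x' < u⁻¹ (g (u x')) := by
    rw [lt_inv_app hum]
    exact hgp
  have : u⁻¹ (g (u x')) ≤ x' := le_csSup hbdd hw'fix
  linarith

lemma fix_not_bddBelow (n : ℕ) (hn : 2 ≤ n) (R : ℝ) (B : Set ℝ)
    (hBsub : ∀ b ∈ B, |b| ≤ R)
    (g : HH) (hg : StrictMono g) (hyp : CommHyp n B g)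
    (x₀ δ₀ : ℝ) (hδ₀ : 0 < δ₀)
    (hwinB : ∀ y : ℝ, |y - x₀| ≤ δ₀ → y ∉ B)
    (hwinup : ∀ y : ℝ, |y - x₀| ≤ δ₀ → x₀ + δ₀ < g y)
    (q : ℝ) (hq : g q = q) : ¬ BddBelow {x : ℝ | g x = x} := by
  intro hbdd
  set F := {x : ℝ | g x = x} with hF
  have hFne : F.Nonempty := ⟨q, hq⟩
  have hFcl : IsClosed F := isClosed_eq g.continuous continuous_id
  set x' := sInf F with hx'
  have hx'F : g x' = x' := hFcl.csInf_mem hFne hbdd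
  have hRmax : (0:ℝ) ≤ max R |x'| := le_trans (abs_nonneg x') (le_max_right _ _)
  obtain ⟨l, s, hl, hdyl, hdys, hplace⟩ :=
    exists_aff_into n hn (max R |x'| + 1) x₀ δ₀ (by linarith) hδ₀
  set u := aff l s hl with hu
  have hum : StrictMono u := aff_strictMono l s hl
  have hadm : ∀ b ∈ B, (l * b + s) ∉ B := by
    intro b hb
    have hbR : |b| ≤ max R |x'| + 1 := le_trans (hBsub b hb)
      (by linarith [le_max_left R |x'|])
    exact hwinB _ (le_of_lt (hplace b hbR))
  have hcomm' := (commHyp_inv hyp) l s hl hdyl hdys hadm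
  set W' := u * g⁻¹ * u⁻¹ with hW'
  have hpwin : |u x' - x₀| ≤ δ₀ := by
    have : u x' = l * x' + s := aff_app l s hl x'
    rw [this]
    exact le_of_lt (hplace x' (by linarith [le_max_right R |x'|]))
  have hW'p : W' (u x') = u x' := conj_fix_point (inv_fix hx'F)
  have hgp : (g⁻¹ : HH) (u x') < u x' := by
    have h := hwinup _ hpwin
    have h2 : u x' ≤ x₀ + δ₀ := by
      have := (abs_le.1 hpwin).2
      linarith
    have h3 : u x' < g (u x') := by linarith
    have := (strictMono_inv hg) h3
    rwa [inv_apply_apply] at this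
  have hWgp : W' ((g⁻¹ : HH) (u x')) = (g⁻¹ : HH) (u x') := by
    have hpc := pcomm_of_mul_eq hcomm' (u x')
    rw [hW'p] at hpc
    exact hpc.symm
  have hw'fix : (g⁻¹ : HH) (u⁻¹ ((g⁻¹ : HH) (u x'))) = u⁻¹ ((g⁻¹ : HH) (u x')) :=
    conj_fix_point_inv hWgp
  have hw'lt : u⁻¹ ((g⁻¹ : HH) (u x')) < x' := by
    rw [inv_lt_app hum]
    exact hgp
  have : x' ≤ u⁻¹ ((g⁻¹ : HH) (u x')) := csInf_le hbdd (fix_of_inv_fix hw'fix)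
  linarith

end BSRC
namespace BSRC
open BSR BSRB Set

lemma gap_of_moved (g : HH)
    (hnub : ¬ BddAbove {x : ℝ | g x = x}) (hnlb : ¬ BddBelow {x : ℝ | g x = x})
    (z : ℝ) (hz : g z ≠ z) :
    ∃ α β : ℝ, α < z ∧ z < β ∧ g α = α ∧ g β = β ∧
      (∀ w, α < w → w < β → g w ≠ w) := by
  set F := {x : ℝ | g x = x} with hF
  have hFcl : IsClosed F := isClosed_eq g.continuous continuous_id
  have hlne : (F ∩ Iic z).Nonempty := by
    rw [not_bddBelow_iff] at hnlb
    obtain ⟨y, hyF, hyz⟩ := hnlb z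
    exact ⟨y, hyF, le_of_lt hyz⟩
  have hrne : (F ∩ Ici z).Nonempty := by
    rw [not_bddAbove_iff] at hnub
    obtain ⟨y, hyF, hyz⟩ := hnub z
    exact ⟨y, hyF, le_of_lt hyz⟩
  have hlbdd : BddAbove (F ∩ Iic z) := ⟨z, fun w hw => hw.2⟩
  have hrbdd : BddBelow (F ∩ Ici z) := ⟨z, fun w hw => hw.2⟩
  set α := sSup (F ∩ Iic z) with hα
  set β := sInf (F ∩ Ici z) with hβ
  have hαmem : α ∈ F ∩ Iic z := (hFcl.inter isClosed_Iic).csSup_mem hlne hlbdd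
  have hβmem : β ∈ F ∩ Ici z := (hFcl.inter isClosed_Ici).csInf_mem hrne hrbdd
  have hαz : α < z := lt_of_le_of_ne hαmem.2 (fun hc => hz (hc ▸ hαmem.1))
  have hzβ : z < β := lt_of_le_of_ne hβmem.2 (fun hc => hz (by rw [hc]; exact hβmem.1))
  refine ⟨α, β, hαz, hzβ, hαmem.1, hβmem.1, ?_⟩
  intro w hw1 hw2 hwfix
  rcases le_total w z with hle | hle
  · have : w ≤ α := le_csSup hlbdd ⟨hwfix, hle⟩
    linarith
  · have : β ≤ w := csInf_le hrbdd ⟨hwfix, hle⟩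
    linarith

lemma gap_sign (g : HH) (α β : ℝ)
    (hgap : ∀ w, α < w → w < β → g w ≠ w)
    (z : ℝ) (hz1 : α < z) (hz2 : z < β) :
    (∀ w, α < w → w < β → w < g w) ∨ (∀ w, α < w → w < β → g w < w) := by
  have hcont : Continuous (fun x => g x - x) := g.continuous.sub continuous_id
  rcases lt_or_gt_of_ne (hgap z hz1 hz2) with hneg | hpos
  · -- g z < z : right branch
    refine Or.inr fun w hw1 hw2 => ?_
    by_contra hc
    push_neg at hc
    have hwlt : w < g w := lt_of_le_of_ne hc (fun hcc => hgap w hw1 hw2 hcc.symm)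
    rcases le_total w z with hle | hle
    · obtain ⟨y, hy, hy0⟩ := intermediate_value_Icc' hle hcont.continuousOn
        (⟨by linarith, by linarith⟩ : (0:ℝ) ∈ Icc (g z - z) (g w - w))
      have hy1 : α < y := lt_of_lt_of_le hw1 hy.1
      have hy2 : y < β := lt_of_le_of_lt hy.2 hz2
      exact hgap y hy1 hy2 (by have hy0' : g y - y = 0 := hy0; linarith)
    · obtain ⟨y, hy, hy0⟩ := intermediate_value_Icc hle hcont.continuousOn
        (⟨by linarith, by linarith⟩ : (0:ℝ) ∈ Icc (g z - z) (g w - w))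
      have hy1 : α < y := lt_of_lt_of_le hz1 hy.1
      have hy2 : y < β := lt_of_le_of_lt hy.2 hw2
      exact hgap y hy1 hy2 (by have hy0' : g y - y = 0 := hy0; linarith)
  · -- z < g z : left branch
    refine Or.inl fun w hw1 hw2 => ?_
    by_contra hc
    push_neg at hc
    have hwlt : g w < w := lt_of_le_of_ne hc (fun hcc => hgap w hw1 hw2 hcc)
    rcases le_total w z with hle | hle
    · obtain ⟨y, hy, hy0⟩ := intermediate_value_Icc hle hcont.continuousOn
        (⟨by linarith, by linarith⟩ : (0:ℝ) ∈ Icc (g w - w) (g z - z))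
      have hy1 : α < y := lt_of_lt_of_le hw1 hy.1
      have hy2 : y < β := lt_of_le_of_lt hy.2 hz2
      exact hgap y hy1 hy2 (by have hy0' : g y - y = 0 := hy0; linarith)
    · obtain ⟨y, hy, hy0⟩ := intermediate_value_Icc' hle hcont.continuousOn
        (⟨by linarith, by linarith⟩ : (0:ℝ) ∈ Icc (g w - w) (g z - z))
      have hy1 : α < y := lt_of_lt_of_le hz1 hy.1
      have hy2 : y < β := lt_of_le_of_lt hy.2 hw2
      exact hgap y hy1 hy2 (by have hy0' : g y - y = 0 := hy0; linarith)

lemma meta_core (n : ℕ) (hn : 2 ≤ n) (R : ℝ) (hR : 0 < R) (B : Set ℝ)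
    (hBcl : IsClosed B) (hBsub : ∀ b ∈ B, |b| ≤ R)
    (g : HH) (hg : StrictMono g) (hyp : CommHyp n B g)
    (x₀ : ℝ) (hx₀B : x₀ ∉ B) (hx₀ : x₀ < g x₀)
    (q : ℝ) (hq : g q = q) : False := by
  obtain ⟨δB, hδBpos, hδB⟩ := Metric.isOpen_iff.1 hBcl.isOpen_compl x₀ hx₀B
  obtain ⟨δ₀, hδ₀pos, hδ₀le, hwinup⟩ := moved_window g hx₀ (δB/2) (by linarith)
  have hwinB : ∀ y : ℝ, |y - x₀| ≤ δ₀ → y ∉ B := by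
    intro y hy
    have hmem : y ∈ Metric.ball x₀ δB := by
      rw [Metric.mem_ball, Real.dist_eq]
      linarith
    exact hδB hmem
  have hnub := fix_not_bddAbove n hn R B hBsub g hg hyp x₀ δ₀ hδ₀pos hwinB hwinup q hq
  have hnlb := fix_not_bddBelow n hn R B hBsub g hg hyp x₀ δ₀ hδ₀pos hwinB hwinup q hq
  by_cases hub : ∃ z, R + 2 < z ∧ g z ≠ z
  · obtain ⟨z, hzR, hz⟩ := hub
    obtain ⟨α, β, hαz, hzβ, hα, hβ, hgap⟩ := gap_of_moved g hnub hnlb z hz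
    have hβfar : ∀ b ∈ B, 2 ≤ |b - β| := by
      intro b hb
      have h1 : |b| ≤ R := hBsub b hb
      have h2 : b ≤ R := le_trans (le_abs_self b) h1
      rw [abs_sub_comm, abs_of_pos (by linarith : (0:ℝ) < β - b)]
      linarith
    rcases gap_sign g α β hgap z hαz hzβ with hpos | hneg
    · exact cert_right n hn R B hBsub g⁻¹ (strictMono_inv hg) (commHyp_inv hyp)
        α β (lt_trans hαz hzβ) (inv_fix hα) (inv_fix hβ)
        (fun w h1 h2 => by
          have h3 := hpos w h1 h2
          have := (strictMono_inv hg) h3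
          rwa [inv_apply_apply] at this) hβfar
    · exact cert_right n hn R B hBsub g hg hyp α β (lt_trans hαz hzβ) hα hβ hneg hβfar
  · by_cases hlb : ∃ z, z < -(R + 2) ∧ g z ≠ z
    · obtain ⟨z, hzR, hz⟩ := hlb
      obtain ⟨α, β, hαz, hzβ, hα, hβ, hgap⟩ := gap_of_moved g hnub hnlb z hz
      have hαfar : ∀ b ∈ B, 2 ≤ |b - α| := by
        intro b hb
        have h1 : |b| ≤ R := hBsub b hb
        have h2 : -R ≤ b := neg_le_of_abs_le h1
        rw [abs_of_pos (by linarith : (0:ℝ) < b - α)]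
        linarith
      rcases gap_sign g α β hgap z hαz hzβ with hpos | hneg
      · exact cert_left n hn R B hBsub g hg hyp α β (lt_trans hαz hzβ) hα hβ hpos hαfar
      · exact cert_left n hn R B hBsub g⁻¹ (strictMono_inv hg) (commHyp_inv hyp)
          α β (lt_trans hαz hzβ) (inv_fix hα) (inv_fix hβ)
          (fun w h1 h2 => by
            have h3 := hneg w h1 h2
            have := (strictMono_inv hg) h3
            rwa [inv_apply_apply] at this) hαfar
    · -- bounded support case
      push_neg at hub hlb
      have hsupp : Supp g ⊆ Icc (-(R+2)) (R+2) := by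
        rw [supp_def]
        refine closure_minimal ?_ isClosed_Icc
        intro w hw
        constructor
        · by_contra hc
          push_neg at hc
          exact hw (hlb w (by linarith))
        · by_contra hc
          push_neg at hc
          exact hw (hub w hc)
      obtain ⟨l, s, hl, hdyl, hdys, hplace⟩ :=
        exists_aff_into n hn (R + 2) x₀ δ₀ (by linarith) hδ₀pos
      set u := aff l s hl with hu
      have hadm : ∀ b ∈ B, (l * b + s) ∉ B := by
        intro b hb
        have hbR : |b| ≤ R + 2 := le_trans (hBsub b hb) (by linarith)
        exact hwinB _ (le_of_lt (hplace b hbR))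
      have hcomm := hyp l s hl hdyl hdys hadm
      set W := u * g * u⁻¹ with hW
      have hgne : g ≠ 1 := by
        intro hc
        rw [hc, one_app] at hx₀
        exact lt_irrefl x₀ hx₀
      have hWne : W ≠ 1 := by
        intro hc
        apply hgne
        have : g = u⁻¹ * W * u := by
          rw [hW]
          group
        rw [this, hc]
        group
      have hsuppW : ∀ y ∈ Supp W, |y - x₀| ≤ δ₀ := by
        intro y hy
        rw [hW, supp_conj] at hy
        obtain ⟨w, hwsupp, rfl⟩ := hy
        have hwIcc := hsupp hwsupp
        have habs : |w| ≤ R + 2 := abs_le.2 ⟨hwIcc.1, hwIcc.2⟩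
        have happ : u w = l * w + s := aff_app l s hl w
        rw [happ]
        exact le_of_lt (hplace w habs)
      refine certificate (g₁ := W) (g₂ := g) hWne hcomm.symm ?_
      · rw [Set.disjoint_left]
        rintro y ⟨y', hy', rfl⟩ hy2
        have h1 : |y' - x₀| ≤ δ₀ := hsuppW y' hy'
        have h2 : x₀ + δ₀ < g y' := hwinup y' h1
        have h3 : |g y' - x₀| ≤ δ₀ := hsuppW (g y') hy2
        have := (abs_le.1 h3).2
        linarith

theorem meta_dichotomy (n : ℕ) (hn : 2 ≤ n) (R : ℝ) (hR : 0 < R) (B : Set ℝ)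
    (hBcl : IsClosed B) (hBsub : ∀ b ∈ B, |b| ≤ R)
    (g : HH) (hg : StrictMono g) (hyp : CommHyp n B g) :
    (∀ x, x ∉ B → g x = x) ∨ (∀ x, g x ≠ x) := by
  by_cases hoff : ∀ x, x ∉ B → g x = x
  · exact Or.inl hoff
  · push_neg at hoff
    obtain ⟨x₀, hx₀B, hx₀⟩ := hoff
    refine Or.inr fun q hq => ?_
    rcases lt_or_gt_of_ne hx₀ with h | h
    · refine meta_core n hn R hR B hBcl hBsub g⁻¹ (strictMono_inv hg) (commHyp_inv hyp)
        x₀ hx₀B ?_ q (inv_fix hq)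
      have := (strictMono_inv hg) h
      rwa [inv_apply_apply] at this
    · exact meta_core n hn R hR B hBcl hBsub g hg hyp x₀ hx₀B h q hq

end BSRC
namespace BSRD
open BSR BSRB BSRC Set

section Transfers

variable {n : ℕ} {hn : 2 ≤ n} {f h : HH}
variable {φ : Subgroup.closure ((BSgroup n hn : Set HH) ∪ {f}) →* HH}

/-- the lift of `f` -/
def Fe (n : ℕ) (hn : 2 ≤ n) (f : HH) : Subgroup.closure ((BSgroup n hn : Set HH) ∪ {f}) :=
  ⟨f, Subgroup.subset_closure (Set.mem_union_right _ (Set.mem_singleton f))⟩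

/-- the lift of an element of BS(1,n) -/
def Ge (n : ℕ) (hn : 2 ≤ n) (f : HH) (γ : HH) (hγ : γ ∈ BSgroup n hn) :
    Subgroup.closure ((BSgroup n hn : Set HH) ∪ {f}) :=
  ⟨γ, Subgroup.subset_closure (Set.mem_union_left _ hγ)⟩

lemma transfer_T0
    (hφΓ : ∀ (γ : HH) (hγ : γ ∈ BSgroup n hn),
      φ ⟨γ, Subgroup.subset_closure (Set.mem_union_left _ hγ)⟩ = γ)
    (hφf : φ ⟨f, Subgroup.subset_closure
        (Set.mem_union_right _ (Set.mem_singleton f))⟩ = h)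
    (u : HH) (hu : u ∈ BSgroup n hn)
    (hd : f * (u*f*u⁻¹) = (u*f*u⁻¹) * f) :
    h * (u*h*u⁻¹) = (u*h*u⁻¹) * h := by
  have hK : (Fe n hn f) * ((Ge n hn f u hu)*(Fe n hn f)*(Ge n hn f u hu)⁻¹)
      = ((Ge n hn f u hu)*(Fe n hn f)*(Ge n hn f u hu)⁻¹) * (Fe n hn f) := Subtype.ext hd
  have h2 := congrArg φ hK
  simp only [map_mul, map_inv, Fe, Ge] at h2
  rw [hφΓ u hu, hφf] at h2
  exact h2

lemma transfer_T3
    (hφΓ : ∀ (γ : HH) (hγ : γ ∈ BSgroup n hn),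
      φ ⟨γ, Subgroup.subset_closure (Set.mem_union_left _ hγ)⟩ = γ)
    (hφf : φ ⟨f, Subgroup.subset_closure
        (Set.mem_union_right _ (Set.mem_singleton f))⟩ = h)
    (u w : HH) (hu : u ∈ BSgroup n hn) (hw : w ∈ BSgroup n hn)
    (hd : (f⁻¹*(u*f*u⁻¹)) * (w*(f⁻¹*(u*f*u⁻¹))*w⁻¹)
        = (w*(f⁻¹*(u*f*u⁻¹))*w⁻¹) * (f⁻¹*(u*f*u⁻¹))) :
    (h⁻¹*(u*h*u⁻¹)) * (w*(h⁻¹*(u*h*u⁻¹))*w⁻¹)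
        = (w*(h⁻¹*(u*h*u⁻¹))*w⁻¹) * (h⁻¹*(u*h*u⁻¹)) := by
  have hK : ((Fe n hn f)⁻¹*((Ge n hn f u hu)*(Fe n hn f)*(Ge n hn f u hu)⁻¹))
        * ((Ge n hn f w hw)*((Fe n hn f)⁻¹*((Ge n hn f u hu)*(Fe n hn f)*(Ge n hn f u hu)⁻¹))*(Ge n hn f w hw)⁻¹)
      = ((Ge n hn f w hw)*((Fe n hn f)⁻¹*((Ge n hn f u hu)*(Fe n hn f)*(Ge n hn f u hu)⁻¹))*(Ge n hn f w hw)⁻¹)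
        * ((Fe n hn f)⁻¹*((Ge n hn f u hu)*(Fe n hn f)*(Ge n hn f u hu)⁻¹)) := Subtype.ext hd
  have h2 := congrArg φ hK
  simp only [map_mul, map_inv, Fe, Ge] at h2
  rw [hφΓ u hu, hφΓ w hw, hφf] at h2
  exact h2

lemma transfer_Tef
    (hφΓ : ∀ (γ : HH) (hγ : γ ∈ BSgroup n hn),
      φ ⟨γ, Subgroup.subset_closure (Set.mem_union_left _ hγ)⟩ = γ)
    (hφf : φ ⟨f, Subgroup.subset_closure
        (Set.mem_union_right _ (Set.mem_singleton f))⟩ = h)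
    (u : HH) (hu : u ∈ BSgroup n hn)
    (hd : (f⁻¹*(u*f*u⁻¹)) * f = f * (f⁻¹*(u*f*u⁻¹))) :
    (h⁻¹*(u*h*u⁻¹)) * h = h * (h⁻¹*(u*h*u⁻¹)) := by
  have hK : ((Fe n hn f)⁻¹*((Ge n hn f u hu)*(Fe n hn f)*(Ge n hn f u hu)⁻¹)) * (Fe n hn f)
      = (Fe n hn f) * ((Fe n hn f)⁻¹*((Ge n hn f u hu)*(Fe n hn f)*(Ge n hn f u hu)⁻¹)) := Subtype.ext hd
  have h2 := congrArg φ hK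
  simp only [map_mul, map_inv, Fe, Ge] at h2
  rw [hφΓ u hu, hφf] at h2
  exact h2

lemma transfer_Tbeta
    (hφΓ : ∀ (γ : HH) (hγ : γ ∈ BSgroup n hn),
      φ ⟨γ, Subgroup.subset_closure (Set.mem_union_left _ hγ)⟩ = γ)
    (hφf : φ ⟨f, Subgroup.subset_closure
        (Set.mem_union_right _ (Set.mem_singleton f))⟩ = h)
    (u v : HH) (hu : u ∈ BSgroup n hn) (hv : v ∈ BSgroup n hn)
    (hd : (f*(u*f*u⁻¹)*f⁻¹) * (v*f*v⁻¹) = (v*f*v⁻¹) * (f*(u*f*u⁻¹)*f⁻¹)) :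
    (h*(u*h*u⁻¹)*h⁻¹) * (v*h*v⁻¹) = (v*h*v⁻¹) * (h*(u*h*u⁻¹)*h⁻¹) := by
  have hK : ((Fe n hn f)*((Ge n hn f u hu)*(Fe n hn f)*(Ge n hn f u hu)⁻¹)*(Fe n hn f)⁻¹)
        * ((Ge n hn f v hv)*(Fe n hn f)*(Ge n hn f v hv)⁻¹)
      = ((Ge n hn f v hv)*(Fe n hn f)*(Ge n hn f v hv)⁻¹)
        * ((Fe n hn f)*((Ge n hn f u hu)*(Fe n hn f)*(Ge n hn f u hu)⁻¹)*(Fe n hn f)⁻¹) :=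
    Subtype.ext hd
  have h2 := congrArg φ hK
  simp only [map_mul, map_inv, Fe, Ge] at h2
  rw [hφΓ u hu, hφΓ v hv, hφf] at h2
  exact h2

end Transfers

/-- an element with bounded support commuting with a fixed-point-free map is trivial -/
lemma eq_one_of_comm_fpf (g k : HH) (hk : StrictMono k) (hcomm : g * k = k * g)
    (hfpf : ∀ x : ℝ, x < k x) (R : ℝ) (hbd : ∀ y ∈ Supp g, |y| ≤ R) : g = 1 := by
  by_contra hg
  have hne : (Supp g).Nonempty := BSR.supp_nonempty_of_ne_one hg
  have hcl : IsClosed (Supp g) := isClosed_supp g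
  have hbdd : BddAbove (Supp g) := ⟨R, fun y hy => le_trans (le_abs_self y) (hbd y hy)⟩
  set x' := sSup (Supp g) with hx'
  have hx'mem : x' ∈ Supp g := hcl.csSup_mem hne hbdd
  have himg : k '' Supp g = Supp g := by
    rw [← supp_conj k g, conj_eq_of_comm hcomm]
  have : k x' ∈ Supp g := by
    rw [← himg]; exact mem_image_of_mem _ hx'mem
  have hle : k x' ≤ x' := le_csSup hbdd this
  exact absurd hle (not_le.2 (hfpf x'))

end BSRD
namespace BSRE
open BSR BSRB Set

lemma dy_neg {n : ℕ} {s : ℝ} (hs : Dy n s) : Dy n (-s) := by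
  obtain ⟨p, m, rfl⟩ := hs
  exact ⟨-p, m, by push_cast; ring⟩

lemma dy_int_add_invpow {n : ℕ} (hn : 2 ≤ n) (k : ℤ) (m : ℕ) :
    Dy n ((k:ℝ) + 1/(n:ℝ)^m) := by
  refine ⟨k * (n:ℕ)^m + 1, m, ?_⟩
  have hnR : (0:ℝ) < (n:ℝ) := n_pos hn
  have hne : ((n:ℝ))^m ≠ 0 := by positivity
  push_cast
  field_simp

lemma dy_pos_commensurable (n : ℕ) (hn : 2 ≤ n) {s s' : ℝ}
    (hs : Dy n s) (hs' : Dy n s') (h0 : 0 < s) (h0' : 0 < s') :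
    ∃ (k k' : ℕ), 0 < k ∧ 0 < k' ∧ (k:ℝ) * s = (k':ℝ) * s' := by
  obtain ⟨p, m, rfl⟩ := hs
  obtain ⟨p', m', rfl⟩ := hs'
  have hnR : (0:ℝ) < (n:ℝ) := n_pos hn
  have hNm : (0:ℝ) < (n:ℝ)^m := by positivity
  have hNm' : (0:ℝ) < (n:ℝ)^m' := by positivity
  have hp : 0 < p := by
    have h1 : (0:ℝ) < (p:ℝ) := by
      have h2 := mul_pos h0 hNm
      rwa [div_mul_cancel₀ _ (ne_of_gt hNm)] at h2
    exact_mod_cast h1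
  have hp' : 0 < p' := by
    have h1 : (0:ℝ) < (p':ℝ) := by
      have h2 := mul_pos h0' hNm'
      rwa [div_mul_cancel₀ _ (ne_of_gt hNm')] at h2
    exact_mod_cast h1
  have hn0 : 0 < n := by omega
  refine ⟨p'.toNat * n^m, p.toNat * n^m', ?_, ?_, ?_⟩
  · exact Nat.mul_pos (by omega) (pow_pos hn0 m)
  · exact Nat.mul_pos (by omega) (pow_pos hn0 m')
  · have e1 : ((p'.toNat : ℕ) : ℝ) = (p' : ℝ) := by
      exact_mod_cast congrArg (fun z : ℤ => (z : ℝ)) (Int.toNat_of_nonneg hp'.le)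
    have e2 : ((p.toNat : ℕ) : ℝ) = (p : ℝ) := by
      exact_mod_cast congrArg (fun z : ℤ => (z : ℝ)) (Int.toNat_of_nonneg hp.le)
    have hcast : ((p'.toNat * n^m : ℕ) : ℝ) = (p':ℝ) * (n:ℝ)^m := by
      push_cast
      rw [e1]
    have hcast' : ((p.toNat * n^m' : ℕ) : ℝ) = (p:ℝ) * (n:ℝ)^m' := by
      push_cast
      rw [e2]
    rw [hcast, hcast']
    field_simp

lemma iter_lt (G : ℝ → ℝ) (s : ℝ) (hlt : ∀ x, G x < G (x - s)) :
    ∀ (k : ℕ) (x : ℝ), G x < G (x - s - k * s) := by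
  intro k
  induction k with
  | zero => intro x; simpa using hlt x
  | succ k ih =>
    intro x
    calc G x < G (x - s - k * s) := ih x
      _ < G (x - s - k * s - s) := hlt _
      _ = G (x - s - (k+1 : ℕ) * s) := by
          congr 1
          push_cast
          ring

lemma iter_eq (G : ℝ → ℝ) (s : ℝ) (heq : ∀ x, G (x - s) = G x) :
    ∀ (k : ℕ) (x : ℝ), G (x - k * s) = G x := by
  intro k
  induction k with
  | zero => intro x; norm_num
  | succ k ih =>
    intro x
    have h1 : x - (k+1 : ℕ) * s = (x - k * s) - s := by push_cast; ring
    rw [h1, heq, ih]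

lemma shift_eq {G : ℝ → ℝ} {s : ℝ} (heq : ∀ x, G (x - s) = G x) :
    ∀ x, G (x + s) = G x := by
  intro x
  have := heq (x + s)
  simpa using this.symm

lemma iter_eq_int (G : ℝ → ℝ) (s : ℝ) (heq : ∀ x, G (x - s) = G x) :
    ∀ (j : ℤ) (x : ℝ), G (x + j * s) = G x := by
  intro j
  induction j using Int.induction_on with
  | zero => intro x; norm_num
  | succ j ih =>
    intro x
    have h1 : x + ((j:ℤ)+1 : ℤ) * s = (x + (j:ℤ) * s) + s := by push_cast; ring
    rw [h1, shift_eq heq, ih]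
  | pred j ih =>
    intro x
    push_cast at ih ⊢
    have h1 : x + (-(j:ℝ)-1) * s = (x + (-(j:ℝ)) * s) - s := by ring
    rw [h1, heq]
    exact ih x

lemma strict_commensurable_absurd (U : ℝ → ℝ) (s s₁ : ℝ)
    (hL : ∀ x, U x < U (x - s))
    (hper : ∀ x, U (x - s₁) = U x)
    (k k' : ℕ) (hk : 0 < k) (hks : (k:ℝ) * s = (k':ℝ) * s₁) : False := by
  obtain ⟨k₁, rfl⟩ := Nat.exists_eq_succ_of_ne_zero hk.ne'
  have h1 := iter_lt U s hL k₁ 0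
  have h2 : (0:ℝ) - s - (k₁:ℝ) * s = 0 - ((k₁+1 : ℕ):ℝ) * s := by push_cast; ring
  rw [h2, show ((k₁+1 : ℕ):ℝ) * s = ((k':ℕ):ℝ) * s₁ from hks] at h1
  have h4 := iter_eq U s₁ hper k' 0
  rw [h4] at h1
  exact lt_irrefl _ h1

/-- the all-periodic case: U is constant -/
lemma periodic_case (n : ℕ) (hn : 2 ≤ n) (M : ℝ) (hM : 0 < M) (U : ℝ → ℝ)
    (hUc : Continuous U)
    (tri1 : ∀ s : ℝ, Dy n s → 2*M < |s| →
       (∀ x, U (x - s) = U x) ∨ (∀ x, U x < U (x-s)) ∨ (∀ x, U (x-s) < U x))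
    (s₀ : ℝ) (hdy₀ : Dy n s₀) (hs₀ : 2*M < |s₀|) (hper₀ : ∀ x, U (x - s₀) = U x) :
    ∀ x y, U x = U y := by
  obtain ⟨s₁, hdy₁, hs₁, hper₁⟩ :
      ∃ s₁ : ℝ, Dy n s₁ ∧ 2*M < s₁ ∧ (∀ x, U (x - s₁) = U x) := by
    rcases le_or_gt 0 s₀ with hpos | hneg
    · exact ⟨s₀, hdy₀, by rwa [abs_of_nonneg hpos] at hs₀, hper₀⟩
    · refine ⟨-s₀, dy_neg hdy₀, by rwa [abs_of_neg hneg] at hs₀, ?_⟩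
      intro x
      have h2 := hper₀ (x + s₀)
      have h3 : x + s₀ - s₀ = x := by ring
      rw [h3] at h2
      have h4 : x - -s₀ = x + s₀ := by ring
      rw [h4]
      exact h2.symm
  have hall : ∀ s : ℝ, Dy n s → 2*M < s → ∀ x, U (x - s) = U x := by
    intro s hdy hs
    have habs : 2*M < |s| := by rw [abs_of_pos (by linarith)]; exact hs
    rcases tri1 s hdy habs with hE | hL | hG
    · exact hE
    · exfalso
      obtain ⟨k, k', hk, hk', hks⟩ :=
        dy_pos_commensurable n hn hdy hdy₁ (by linarith) (by linarith)
      exact strict_commensurable_absurd U s s₁ hL hper₁ k k' hk hks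
    · exfalso
      obtain ⟨k, k', hk, hk', hks⟩ :=
        dy_pos_commensurable n hn hdy hdy₁ (by linarith) (by linarith)
      refine strict_commensurable_absurd (fun x => -(U x)) s s₁ ?_ ?_ k k' hk hks
      · intro x
        have := hG x
        simpa using this
      · intro x
        have := hper₁ x
        simpa using this
  have hsmall : ∀ (m : ℕ) (x : ℝ), U (x - 1/(n:ℝ)^m) = U x := by
    intro m x
    set k₀ : ℤ := ⌈2*M⌉ + 1 with hk₀
    have hk₀R : 2*M < (k₀:ℝ) := by
      have := Int.le_ceil (2*M)
      rw [hk₀]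
      push_cast
      linarith
    have hper_k : ∀ z, U (z - (k₀:ℝ)) = U z := hall _ (dy_int k₀) hk₀R
    have hnR : (0:ℝ) < (n:ℝ) := n_pos hn
    have hpow : (0:ℝ) < (n:ℝ)^m := by positivity
    have hinv : (0:ℝ) < 1/(n:ℝ)^m := by positivity
    have hper_k' : ∀ z, U (z - ((k₀:ℝ) + 1/(n:ℝ)^m)) = U z :=
      hall _ (dy_int_add_invpow hn k₀ m) (by linarith)
    calc U (x - 1/(n:ℝ)^m)
        = U ((x - ((k₀:ℝ) + 1/(n:ℝ)^m)) + (k₀:ℝ)) := by congr 1; ring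
      _ = U (x - ((k₀:ℝ) + 1/(n:ℝ)^m)) := shift_eq hper_k _
      _ = U x := hper_k' x
  intro x y
  by_contra hxy
  set d := |U x - U y| with hd
  have hdpos : 0 < d := abs_pos.2 (sub_ne_zero.2 hxy)
  obtain ⟨δ, hδpos, hδ⟩ := Metric.continuous_iff.1 hUc y (d/2) (by linarith)
  obtain ⟨m, hm⟩ := exists_pow_gt hn (1/δ)
  set N := (n:ℝ)^m with hN
  have hnR : (0:ℝ) < (n:ℝ) := n_pos hn
  have hNpos : 0 < N := by rw [hN]; positivity
  have hpδ : 1/N < δ := by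
    rw [div_lt_iff₀ hNpos]
    rw [div_lt_iff₀ hδpos] at hm
    linarith [hm]
  set j := ⌊(y - x) * N⌋ with hj
  have hj1 : x + (j:ℝ) * (1/N) ≤ y := by
    have := Int.floor_le ((y - x) * N)
    rw [← hj] at this
    have h2 : (j:ℝ) * (1/N) ≤ (y - x) := by
      rw [mul_one_div, div_le_iff₀ hNpos]
      linarith
    linarith
  have hj2 : y - 1/N < x + (j:ℝ) * (1/N) := by
    have := Int.lt_floor_add_one ((y - x) * N)
    rw [← hj] at this
    have h2 : y - x < ((j:ℝ) + 1) * (1/N) := by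
      rw [mul_one_div, lt_div_iff₀ hNpos]
      push_cast
      linarith
    have h3 : ((j:ℝ) + 1) * (1/N) = (j:ℝ) * (1/N) + 1/N := by ring
    linarith [h3 ▸ h2]
  have hU1 : U (x + (j:ℝ) * (1/N)) = U x :=
    iter_eq_int U (1/N) (hsmall m) j x
  have hdist : dist (x + (j:ℝ) * (1/N)) y < δ := by
    rw [Real.dist_eq, abs_lt]
    constructor
    · linarith
    · linarith
  have hfin := hδ _ hdist
  rw [hU1, Real.dist_eq] at hfin
  rw [← hd] at hfin
  linarith

end BSRE
namespace BSRE
open BSR BSRB Set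

lemma dy_nat {n : ℕ} (k : ℕ) : Dy n (k:ℝ) := ⟨k, 0, by norm_num⟩

lemma mixed_absurd (U : ℝ → ℝ) (s s' : ℝ)
    (hp : ∀ x, U x < U (x - s)) (hm : ∀ x, U (x - s') < U x)
    (k k' : ℕ) (hk : 0 < k) (hk' : 0 < k') (hks : (k:ℝ) * s = (k':ℝ) * s') : False := by
  obtain ⟨k₁, rfl⟩ := Nat.exists_eq_succ_of_ne_zero hk.ne'
  obtain ⟨k₂, rfl⟩ := Nat.exists_eq_succ_of_ne_zero hk'.ne'
  have h1 := iter_lt U s hp k₁ 0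
  have h2 := iter_lt (fun x => -(U x)) s' (fun x => by simpa using hm x) k₂ 0
  simp only [neg_lt_neg_iff] at h2
  have e1 : (0:ℝ) - s - (k₁:ℝ) * s = 0 - ((k₁+1 : ℕ):ℝ) * s := by push_cast; ring
  have e2 : (0:ℝ) - s' - (k₂:ℝ) * s' = 0 - ((k₂+1 : ℕ):ℝ) * s' := by push_cast; ring
  rw [e1, hks] at h1
  rw [e2] at h2
  exact lt_irrefl _ (lt_trans h1 h2)

/-- σ = + strict case is absurd -/
lemma strict_plus_absurd (n : ℕ) (hn : 2 ≤ n) (M : ℝ) (hM : 0 < M) (U : ℝ → ℝ)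
    (hUc : Continuous U) (hUpos : ∀ x, 0 < U x) (Cb : ℝ) (hCb : ∀ x, U x ≤ Cb)
    (hplus : ∀ s : ℝ, Dy n s → 2*M < s → ∀ x, U x < U (x - s))
    (commU : ∀ s : ℝ, Dy n s → 2*M < |s| →
       ∀ x, U (x-s) + U (x + U (x-s)) = U x + U (x + U x - s)) : False := by
  set C : ℝ := 2*M + 1 with hC
  have hmono : ∀ y z : ℝ, z ≤ y - C → U y ≤ U z := by
    intro y z hz
    by_contra hc
    push_neg at hc
    obtain ⟨δ, hδpos, hδ⟩ := Metric.continuous_iff.1 hUc z (U y - U z) (by linarith)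
    have h1 : 2*M < y - z := by rw [hC] at hz; linarith
    have h2 : max (2*M) (y - z - δ) < y - z := by
      rw [max_lt_iff]; exact ⟨h1, by linarith⟩
    obtain ⟨s, hdy, hs1, hs2⟩ := dy_dense hn h2
    have hs2M : 2*M < s := lt_of_le_of_lt (le_max_left _ _) hs1
    have hsd : dist (y - s) z < δ := by
      rw [Real.dist_eq, abs_lt]
      have h5 := lt_of_le_of_lt (le_max_right _ _) hs1
      constructor
      · linarith
      · linarith
    have h3 := hδ _ hsd
    rw [Real.dist_eq, abs_lt] at h3
    have h4 := hplus s hdy hs2M y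
    linarith [h3.2]
  set Mu := sSup (range U) with hMu
  set m := sInf (range U) with hm
  have hbddA : BddAbove (range U) := ⟨Cb, by rintro y ⟨x, rfl⟩; exact hCb x⟩
  have hbddB : BddBelow (range U) := ⟨0, by rintro y ⟨x, rfl⟩; exact (hUpos x).le⟩
  have hrne : (range U).Nonempty := ⟨U 0, 0, rfl⟩
  have hUleMu : ∀ x, U x ≤ Mu := fun x => le_csSup hbddA ⟨x, rfl⟩
  have hmleU : ∀ x, m ≤ U x := fun x => csInf_le hbddB ⟨x, rfl⟩
  have hLeft : ∀ ε : ℝ, 0 < ε → ∃ Z : ℝ, ∀ z ≤ Z, Mu - ε < U z := by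
    intro ε hε
    obtain ⟨y, hymem, hy⟩ := exists_lt_of_lt_csSup hrne (show Mu - ε < Mu by linarith)
    obtain ⟨w, rfl⟩ := hymem
    exact ⟨w - C, fun z hz => lt_of_lt_of_le hy (hmono w z hz)⟩
  have hRight : ∀ ε : ℝ, 0 < ε → ∃ Z : ℝ, ∀ y, Z ≤ y → U y < m + ε := by
    intro ε hε
    obtain ⟨y, hymem, hy⟩ := exists_lt_of_csInf_lt hrne (show m < m + ε by linarith)
    obtain ⟨w, rfl⟩ := hymem
    exact ⟨w + C, fun y hy' => lt_of_le_of_lt (hmono y w (by linarith)) hy⟩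
  have hMupos : 0 < Mu := lt_of_lt_of_le (hUpos 0) (hUleMu 0)
  have hper : ∀ x, U (x + Mu) = U x := by
    intro x
    by_contra hne
    set d := |U (x + Mu) - U x| with hd
    have hdpos : 0 < d := abs_pos.2 (sub_ne_zero.2 hne)
    have hεpos : 0 < d/4 := by linarith
    obtain ⟨δc, hδcpos, hδc⟩ := Metric.continuous_iff.1 hUc (x + Mu) (d/4) hεpos
    set ε' := min (d/4) δc with hε'
    have hε'pos : 0 < ε' := lt_min hεpos hδcpos
    obtain ⟨Z1, hZ1⟩ := hLeft ε' hε'pos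
    obtain ⟨k, hk⟩ := exists_nat_gt (max (2*M) (max (x - Z1) (x + U x - Z1)))
    have hk2M : 2*M < (k:ℝ) := lt_of_le_of_lt (le_max_left _ _) hk
    have hkx : x - (k:ℝ) ≤ Z1 := by
      have := lt_of_le_of_lt (le_trans (le_max_left _ _) (le_max_right _ _)) hk
      linarith
    have hkux : x + U x - (k:ℝ) ≤ Z1 := by
      have := lt_of_le_of_lt (le_trans (le_max_right _ _) (le_max_right _ _)) hk
      linarith
    have e1 : Mu - ε' < U (x - k) := hZ1 _ hkx
    have e1' : U (x - k) ≤ Mu := hUleMu _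
    have e3 : Mu - ε' < U (x + U x - k) := hZ1 _ hkux
    have e3' : U (x + U x - k) ≤ Mu := hUleMu _
    have hargs : dist (x + U (x - k)) (x + Mu) < δc := by
      rw [Real.dist_eq, abs_lt]
      have h6 : ε' ≤ δc := min_le_right _ _
      constructor
      · linarith
      · linarith
    have e2 := hδc _ hargs
    rw [Real.dist_eq, abs_lt] at e2
    have heqx := commU (k:ℝ) (dy_nat k) (by rw [abs_of_pos (by linarith : (0:ℝ) < (k:ℝ))]; exact hk2M) x
    have hεε : ε' ≤ d/4 := min_le_left _ _
    have hlt : |U (x + Mu) - U x| < 3 * (d/4) := by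
      rw [abs_lt]
      constructor
      · linarith [e2.1]
      · linarith [e2.2]
    rw [← hd] at hlt
    linarith
  have hiter : ∀ (j : ℕ) (x : ℝ), U (x + j * Mu) = U x := by
    intro j
    induction j with
    | zero => intro x; norm_num
    | succ j ih =>
      intro x
      have h1 : x + ((j+1 : ℕ):ℝ) * Mu = (x + (j:ℝ) * Mu) + Mu := by push_cast; ring
      rw [h1, hper, ih]
  have hconst : ∀ x, U x ≤ m := by
    intro x
    by_contra hc
    push_neg at hc
    obtain ⟨Z, hZ⟩ := hRight (U x - m) (by linarith)
    obtain ⟨j, hj⟩ := exists_nat_gt ((Z - x)/Mu)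
    have hx : Z ≤ x + (j:ℝ) * Mu := by
      rw [div_lt_iff₀ hMupos] at hj
      linarith
    have hfin := hZ _ hx
    rw [hiter j x] at hfin
    linarith
  set k₀ : ℤ := ⌈2*M⌉ + 1 with hk₀
  have hk₀R : 2*M < (k₀:ℝ) := by
    have := Int.le_ceil (2*M)
    rw [hk₀]
    push_cast
    linarith
  have hbase := hplus (k₀:ℝ) (dy_int k₀) hk₀R 0
  have h2 := hconst (0 - (k₀:ℝ))
  have h3 := hmleU 0
  linarith

/-- σ = - strict case is absurd -/
lemma strict_minus_absurd (n : ℕ) (hn : 2 ≤ n) (M : ℝ) (hM : 0 < M) (U : ℝ → ℝ)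
    (hUc : Continuous U) (hUpos : ∀ x, 0 < U x) (Cb : ℝ) (hCb : ∀ x, U x ≤ Cb)
    (hminus : ∀ s : ℝ, Dy n s → 2*M < s → ∀ x, U (x - s) < U x)
    (hSN : ∀ s : ℝ, Dy n s → ((n:ℝ)+1)*M < |s| → ∀ x, U x < (n:ℝ) * U ((x-s)/(n:ℝ)))
    (commU : ∀ s : ℝ, Dy n s → 2*M < |s| →
       ∀ x, U (x-s) + U (x + U (x-s)) = U x + U (x + U x - s)) : False := by
  set C : ℝ := 2*M + 1 with hC
  have hmono : ∀ y z : ℝ, z ≤ y - C → U z ≤ U y := by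
    intro y z hz
    by_contra hc
    push_neg at hc
    obtain ⟨δ, hδpos, hδ⟩ := Metric.continuous_iff.1 hUc z (U z - U y) (by linarith)
    have h1 : 2*M < y - z := by rw [hC] at hz; linarith
    have h2 : max (2*M) (y - z - δ) < y - z := by
      rw [max_lt_iff]; exact ⟨h1, by linarith⟩
    obtain ⟨s, hdy, hs1, hs2⟩ := dy_dense hn h2
    have hs2M : 2*M < s := lt_of_le_of_lt (le_max_left _ _) hs1
    have hsd : dist (y - s) z < δ := by
      rw [Real.dist_eq, abs_lt]
      have h5 := lt_of_le_of_lt (le_max_right _ _) hs1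
      constructor
      · linarith
      · linarith
    have h3 := hδ _ hsd
    rw [Real.dist_eq, abs_lt] at h3
    have h4 := hminus s hdy hs2M y
    linarith [h3.1]
  set Mu := sSup (range U) with hMu
  set m := sInf (range U) with hm
  have hbddA : BddAbove (range U) := ⟨Cb, by rintro y ⟨x, rfl⟩; exact hCb x⟩
  have hbddB : BddBelow (range U) := ⟨0, by rintro y ⟨x, rfl⟩; exact (hUpos x).le⟩
  have hrne : (range U).Nonempty := ⟨U 0, 0, rfl⟩
  have hUleMu : ∀ x, U x ≤ Mu := fun x => le_csSup hbddA ⟨x, rfl⟩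
  have hmleU : ∀ x, m ≤ U x := fun x => csInf_le hbddB ⟨x, rfl⟩
  have hLeft : ∀ ε : ℝ, 0 < ε → ∃ Z : ℝ, ∀ z ≤ Z, U z < m + ε := by
    intro ε hε
    obtain ⟨y, hymem, hy⟩ := exists_lt_of_csInf_lt hrne (show m < m + ε by linarith)
    obtain ⟨w, rfl⟩ := hymem
    exact ⟨w - C, fun z hz => lt_of_le_of_lt (hmono w z hz) hy⟩
  have hRight : ∀ ε : ℝ, 0 < ε → ∃ Z : ℝ, ∀ y, Z ≤ y → Mu - ε < U y := by
    intro ε hε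
    obtain ⟨y, hymem, hy⟩ := exists_lt_of_lt_csSup hrne (show Mu - ε < Mu by linarith)
    obtain ⟨w, rfl⟩ := hymem
    exact ⟨w + C, fun y hy' => lt_of_lt_of_le hy (hmono y w (by linarith))⟩
  have hMupos : 0 < Mu := lt_of_lt_of_le (hUpos 0) (hUleMu 0)
  have hnR : (0:ℝ) < (n:ℝ) := n_pos hn
  -- m is positive, via the scaled family
  have hUnm : ∀ x, U x ≤ (n:ℝ) * m := by
    intro x
    by_contra hc
    push_neg at hc
    have hε : 0 < (U x - (n:ℝ)*m) / (n:ℝ) := div_pos (by linarith) (n_pos hn)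
    obtain ⟨Z, hZ⟩ := hLeft _ hε
    have hT : max (((n:ℝ)+1)*M) (x - (n:ℝ)*Z) < max (((n:ℝ)+1)*M) (x - (n:ℝ)*Z) + 1 := by
      linarith
    obtain ⟨s, hdy, hs1, hs2⟩ := dy_dense hn hT
    have hsM : ((n:ℝ)+1)*M < s := lt_of_le_of_lt (le_max_left _ _) hs1
    have hsabs : ((n:ℝ)+1)*M < |s| := by
      rw [abs_of_pos (by nlinarith : (0:ℝ) < s)]; exact hsM
    have hsx : (x - s)/(n:ℝ) ≤ Z := by
      rw [div_le_iff₀ hnR]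
      have := lt_of_le_of_lt (le_max_right _ _) hs1
      linarith
    have h5 := hSN s hdy hsabs x
    have h6 := hZ _ hsx
    have h7 : (n:ℝ) * U ((x-s)/(n:ℝ)) < (n:ℝ) * (m + (U x - (n:ℝ)*m) / (n:ℝ)) := by
      exact mul_lt_mul_of_pos_left h6 hnR
    rw [mul_add, mul_div_cancel₀ _ (ne_of_gt hnR)] at h7
    linarith
  have hmpos : 0 < m := by
    have h1 : Mu ≤ (n:ℝ) * m := csSup_le hrne (by rintro y ⟨x, rfl⟩; exact hUnm x)
    nlinarith
  have hper : ∀ x, U (x + m) = U x := by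
    intro x
    by_contra hne
    set d := |U (x + m) - U x| with hd
    have hdpos : 0 < d := abs_pos.2 (sub_ne_zero.2 hne)
    have hεpos : 0 < d/4 := by linarith
    obtain ⟨δc, hδcpos, hδc⟩ := Metric.continuous_iff.1 hUc (x + m) (d/4) hεpos
    set ε' := min (d/4) δc with hε'
    have hε'pos : 0 < ε' := lt_min hεpos hδcpos
    obtain ⟨Z1, hZ1⟩ := hLeft ε' hε'pos
    obtain ⟨k, hk⟩ := exists_nat_gt (max (2*M) (max (x - Z1) (x + U x - Z1)))
    have hk2M : 2*M < (k:ℝ) := lt_of_le_of_lt (le_max_left _ _) hk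
    have hkx : x - (k:ℝ) ≤ Z1 := by
      have := lt_of_le_of_lt (le_trans (le_max_left _ _) (le_max_right _ _)) hk
      linarith
    have hkux : x + U x - (k:ℝ) ≤ Z1 := by
      have := lt_of_le_of_lt (le_trans (le_max_right _ _) (le_max_right _ _)) hk
      linarith
    have e1 : U (x - k) < m + ε' := hZ1 _ hkx
    have e1' : m ≤ U (x - k) := hmleU _
    have e3 : U (x + U x - k) < m + ε' := hZ1 _ hkux
    have e3' : m ≤ U (x + U x - k) := hmleU _
    have hargs : dist (x + U (x - k)) (x + m) < δc := by
      rw [Real.dist_eq, abs_lt]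
      have h6 : ε' ≤ δc := min_le_right _ _
      constructor
      · linarith
      · linarith
    have e2 := hδc _ hargs
    rw [Real.dist_eq, abs_lt] at e2
    have heqx := commU (k:ℝ) (dy_nat k) (by rw [abs_of_pos (by linarith : (0:ℝ) < (k:ℝ))]; exact hk2M) x
    have hεε : ε' ≤ d/4 := min_le_left _ _
    have hlt : |U (x + m) - U x| < 3 * (d/4) := by
      rw [abs_lt]
      constructor
      · linarith [e2.1]
      · linarith [e2.2]
    rw [← hd] at hlt
    linarith
  have hiter : ∀ (j : ℕ) (x : ℝ), U (x + j * m) = U x := by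
    intro j
    induction j with
    | zero => intro x; norm_num
    | succ j ih =>
      intro x
      have h1 : x + ((j+1 : ℕ):ℝ) * m = (x + (j:ℝ) * m) + m := by push_cast; ring
      rw [h1, hper, ih]
  have hconst : ∀ x, Mu ≤ U x := by
    intro x
    by_contra hc
    push_neg at hc
    obtain ⟨Z, hZ⟩ := hRight (Mu - U x) (by linarith)
    obtain ⟨j, hj⟩ := exists_nat_gt ((Z - x)/m)
    have hx : Z ≤ x + (j:ℝ) * m := by
      rw [div_lt_iff₀ hmpos] at hj
      linarith
    have hfin := hZ _ hx
    rw [hiter j x] at hfin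
    linarith
  set k₀ : ℤ := ⌈2*M⌉ + 1 with hk₀
  have hk₀R : 2*M < (k₀:ℝ) := by
    have := Int.le_ceil (2*M)
    rw [hk₀]
    push_cast
    linarith
  have hbase := hminus (k₀:ℝ) (dy_int k₀) hk₀R 0
  have h2 := hconst (0 - (k₀:ℝ))
  have h3 := hUleMu 0
  linarith

end BSRE
namespace BSRE
open BSR BSRB Set

theorem fpf_core (n : ℕ) (hn : 2 ≤ n) (M : ℝ) (hM : 0 < M) (U : ℝ → ℝ)
    (hUc : Continuous U) (hUpos : ∀ x, 0 < U x)
    (tri1U : ∀ s : ℝ, Dy n s → 2*M < |s| →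
       (∀ x, U (x - s) = U x) ∨ (∀ x, U x < U (x-s)) ∨ (∀ x, U (x-s) < U x))
    (hSN : ∀ s : ℝ, Dy n s → ((n:ℝ)+1)*M < |s| → ∀ x, U x < (n:ℝ) * U ((x-s)/(n:ℝ)))
    (commU : ∀ s : ℝ, Dy n s → 2*M < |s| →
       ∀ x, U (x-s) + U (x + U (x-s)) = U x + U (x + U x - s)) :
    ∀ x y, U x = U y := by
  have hnR : (0:ℝ) < (n:ℝ) := n_pos hn
  have hn1 : (1:ℝ) < (n:ℝ) := one_lt_n hn
  obtain ⟨Cb, hCb⟩ : ∃ Cb, ∀ x, U x ≤ Cb := by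
    set A := ((n:ℝ)+1)*M + (n:ℝ) + 2 with hA
    have hApos : 0 < A := by nlinarith
    obtain ⟨w₁, hw₁mem, hw₁⟩ := (isCompact_Icc (a := -(1:ℝ)) (b := 1)).exists_isMaxOn
      ⟨0, by norm_num⟩ hUc.continuousOn
    obtain ⟨w₂, hw₂mem, hw₂⟩ := (isCompact_Icc (a := -A) (b := A)).exists_isMaxOn
      ⟨0, by constructor <;> linarith⟩ hUc.continuousOn
    refine ⟨max ((n:ℝ) * U w₁) (U w₂), fun x => ?_⟩
    rcases le_or_gt |x| A with hx | hx
    · have hxmem : x ∈ Icc (-A) A := by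
        have := abs_le.1 hx
        exact ⟨this.1, this.2⟩
      exact le_trans (hw₂ hxmem) (le_max_right _ _)
    · rcases le_or_gt 0 x with hxp | hxn
      · have hxA : A < x := by rwa [abs_of_nonneg hxp] at hx
        obtain ⟨s, hdy, hs1, hs2⟩ := dy_dense hn (show x - (n:ℝ) < x - 1 by linarith)
        have hspos : 0 < s := by nlinarith
        have hsadm : ((n:ℝ)+1)*M < |s| := by
          rw [abs_of_pos hspos]; nlinarith
        have hwmem : (x - s)/(n:ℝ) ∈ Icc (-(1:ℝ)) 1 := by
          constructor
          · rw [le_div_iff₀ hnR]; nlinarith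
          · rw [div_le_one hnR]; nlinarith
        have h5 := hSN s hdy hsadm x
        have h6 : U ((x-s)/(n:ℝ)) ≤ U w₁ := hw₁ hwmem
        have h7 : U x < (n:ℝ) * U w₁ :=
          lt_of_lt_of_le h5 (mul_le_mul_of_nonneg_left h6 hnR.le)
        exact le_trans h7.le (le_max_left _ _)
      · have hxA : A < -x := by rwa [abs_of_neg hxn] at hx
        obtain ⟨s, hdy, hs1, hs2⟩ := dy_dense hn (show x + 1 < x + (n:ℝ) by linarith)
        have hsneg : s < 0 := by nlinarith
        have hsadm : ((n:ℝ)+1)*M < |s| := by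
          rw [abs_of_neg hsneg]; nlinarith
        have hwmem : (x - s)/(n:ℝ) ∈ Icc (-(1:ℝ)) 1 := by
          constructor
          · rw [le_div_iff₀ hnR]; nlinarith
          · rw [div_le_one hnR]; nlinarith
        have h5 := hSN s hdy hsadm x
        have h6 : U ((x-s)/(n:ℝ)) ≤ U w₁ := hw₁ hwmem
        have h7 : U x < (n:ℝ) * U w₁ :=
          lt_of_lt_of_le h5 (mul_le_mul_of_nonneg_left h6 hnR.le)
        exact le_trans h7.le (le_max_left _ _)
  by_cases hper : ∃ s : ℝ, Dy n s ∧ 2*M < |s| ∧ (∀ x, U (x - s) = U x)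
  · obtain ⟨s₀, h1, h2, h3⟩ := hper
    exact periodic_case n hn M hM U hUc tri1U s₀ h1 h2 h3
  · push_neg at hper
    have hstrict : ∀ s : ℝ, Dy n s → 2*M < |s| →
        (∀ x, U x < U (x-s)) ∨ (∀ x, U (x-s) < U x) := by
      intro s h1 h2
      rcases tri1U s h1 h2 with hE | hL | hG
      · obtain ⟨x, hx⟩ := hper s h1 h2
        exact absurd (hE x) hx
      · exact Or.inl hL
      · exact Or.inr hG
    set k₀ : ℤ := ⌈2*M⌉ + 1 with hk₀
    have hk₀R : 2*M < (k₀:ℝ) := by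
      have := Int.le_ceil (2*M)
      rw [hk₀]; push_cast; linarith
    have hk₀pos : (0:ℝ) < (k₀:ℝ) := by linarith
    have hk₀abs : 2*M < |(k₀:ℝ)| := by rwa [abs_of_pos hk₀pos]
    rcases hstrict (k₀:ℝ) (dy_int k₀) hk₀abs with hbp | hbm
    · have hplus : ∀ s : ℝ, Dy n s → 2*M < s → ∀ x, U x < U (x - s) := by
        intro s h1 h2
        have hspos : 0 < s := by linarith
        rcases hstrict s h1 (by rwa [abs_of_pos hspos]) with hgood | hbad
        · exact hgood
        · exfalso
          obtain ⟨k, k', hk, hk', hks⟩ :=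
            dy_pos_commensurable n hn (dy_int k₀) h1 hk₀pos hspos
          exact mixed_absurd U (k₀:ℝ) s hbp hbad k k' hk hk' hks
      exact (strict_plus_absurd n hn M hM U hUc hUpos Cb hCb hplus commU).elim
    · have hminus : ∀ s : ℝ, Dy n s → 2*M < s → ∀ x, U (x - s) < U x := by
        intro s h1 h2
        have hspos : 0 < s := by linarith
        rcases hstrict s h1 (by rwa [abs_of_pos hspos]) with hbad | hgood
        · exfalso
          obtain ⟨k, k', hk, hk', hks⟩ :=
            dy_pos_commensurable n hn h1 (dy_int k₀) hspos hk₀pos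
          exact mixed_absurd U s (k₀:ℝ) hbad hbm k k' hk hk' hks
        · exact hgood
      exact (strict_minus_absurd n hn M hM U hUc hUpos Cb hCb hminus hSN commU).elim

end BSRE
namespace BSRF
open BSR BSRB BSRC BSRD Set

lemma conj_strictMono (u g : HH) (hu : StrictMono u) (hg : StrictMono g) :
    StrictMono ⇑(u*g*u⁻¹) := by
  intro a b hab
  rw [conj_app, conj_app]
  exact hu (hg ((strictMono_inv hu) hab))

set_option maxHeartbeats 1000000 in
lemma beta_point (n : ℕ) (hn : 2 ≤ n) (f h : HH) (hfm : StrictMono f) (hhm : StrictMono h)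
    (M : ℝ) (hM : 0 < M) (S : Set ℝ) (hScl : IsClosed S)
    (hSM : ∀ b ∈ S, |b| ≤ M)
    (hsupph : ∀ z : ℝ, h z ≠ z → z ∈ S)
    (hsuppf : ∀ z : ℝ, f z ≠ z → z ∈ S)
    (hTβ : ∀ (l₁ s₁ l₂ s₂ : ℝ) (hl₁ : 0 < l₁) (hl₂ : 0 < l₂),
        DyL n l₁ → Dy n s₁ → DyL n l₂ → Dy n s₂ →
        Disjoint (Supp (f * ((aff l₁ s₁ hl₁) * f * (aff l₁ s₁ hl₁)⁻¹) * f⁻¹))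
                 (Supp ((aff l₂ s₂ hl₂) * f * (aff l₂ s₂ hl₂)⁻¹)) →
        (h*((aff l₁ s₁ hl₁)*h*(aff l₁ s₁ hl₁)⁻¹)*h⁻¹) * ((aff l₂ s₂ hl₂)*h*(aff l₂ s₂ hl₂)⁻¹)
        = ((aff l₂ s₂ hl₂)*h*(aff l₂ s₂ hl₂)⁻¹) * (h*((aff l₁ s₁ hl₁)*h*(aff l₁ s₁ hl₁)⁻¹)*h⁻¹))
    (x₁ : ℝ) (hx₁up : x₁ < h x₁) (hxf : h x₁ ≠ f x₁) : False := by
  set y := h x₁ with hy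
  set d := y - x₁ with hdd
  have hd : 0 < d := by rw [hdd]; linarith
  have hyf : y ≠ f x₁ := hxf
  set ρ := |y - f x₁| with hρdef
  have hρ : 0 < ρ := abs_pos.2 (sub_ne_zero.2 hyf)
  set R₂ := d + M + |x₁| + 1 with hR₂
  have hR₂pos : 0 < R₂ := by
    have := abs_nonneg x₁
    rw [hR₂]; linarith
  obtain ⟨l₂, hdyl₂, hl₂pos, hl₂sm⟩ := dyL_small hn (ρ / (2*R₂)) (by positivity)
  have hl₂ρ : l₂ * R₂ < ρ/2 := by
    have h1 : l₂ * R₂ < (ρ / (2*R₂)) * R₂ := mul_lt_mul_of_pos_right hl₂sm hR₂pos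
    have h2 : (ρ / (2*R₂)) * R₂ = ρ/2 := by field_simp
    linarith [h2 ▸ h1]
  have hld : 0 < l₂ * d := mul_pos hl₂pos hd
  obtain ⟨s₂, hdys₂, hs₂1, hs₂2⟩ := dy_dense hn
    (show y - l₂*d/2 - l₂*x₁ < y - l₂*d/4 - l₂*x₁ by nlinarith [hld])
  set v := aff l₂ s₂ hl₂pos with hv
  have hvm : StrictMono v := aff_strictMono _ _ _
  have hvx₁ : v x₁ = l₂*x₁ + s₂ := aff_app _ _ _ _
  have hvx₁lo : y - l₂*d/2 < v x₁ := by rw [hvx₁]; linarith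
  have hvx₁hi : v x₁ < y - l₂*d/4 := by rw [hvx₁]; linarith
  have hvy : v y = v x₁ + l₂*d := by
    rw [aff_app, hvx₁, hdd]; ring
  have hvylo : y + l₂*d/2 < v y := by rw [hvy]; linarith
  have hvS : ∀ b ∈ S, ρ/2 < |v b - f x₁| := by
    intro b hb
    have hb1 : |b| ≤ M := hSM b hb
    have h1 : |v b - y| ≤ l₂ * R₂ := by
      have e0 : v b = l₂ * b + s₂ := aff_app _ _ _ _
      have e1 : v b - y = (l₂*x₁ + s₂ - y) + l₂*(b - x₁) := by rw [e0]; ring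
      have e2 : |l₂*x₁ + s₂ - y| ≤ l₂*d/2 := by
        rw [abs_le]
        constructor
        · linarith
        · linarith
      have e3 : |l₂*(b - x₁)| ≤ l₂*(M + |x₁|) := by
        rw [abs_mul, abs_of_pos hl₂pos]
        have : |b - x₁| ≤ |b| + |x₁| := abs_sub b x₁
        nlinarith
      calc |v b - y| = |(l₂*x₁ + s₂ - y) + l₂*(b - x₁)| := by rw [e1]
        _ ≤ |l₂*x₁ + s₂ - y| + |l₂*(b - x₁)| := abs_add_le _ _
        _ ≤ l₂*d/2 + l₂*(M + |x₁|) := by linarith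
        _ ≤ l₂ * R₂ := by rw [hR₂]; nlinarith
    have h2 : ρ ≤ |v b - y| + |v b - f x₁| := by
      have e4 : y - f x₁ = -(v b - y) + (v b - f x₁) := by ring
      calc ρ = |y - f x₁| := rfl
        _ = |(-(v b - y)) + (v b - f x₁)| := by rw [e4]
        _ ≤ |(-(v b - y))| + |v b - f x₁| := abs_add_le _ _
        _ = |v b - y| + |v b - f x₁| := by rw [abs_neg]
    nlinarith [h1, h2, hl₂ρ]
  obtain ⟨δh, hδhpos, hδh⟩ := Metric.continuous_iff.1 h.continuous x₁ (l₂*d/8) (by linarith)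
  obtain ⟨δf, hδfpos, hδf⟩ := Metric.continuous_iff.1 f.continuous x₁ (ρ/4) (by linarith)
  obtain ⟨l₁, s₁, hl₁pos, hdyl₁, hdys₁, hplace⟩ :=
    exists_aff_into n hn M x₁ (min δh δf) hM (lt_min hδhpos hδfpos)
  set u := aff l₁ s₁ hl₁pos with hu
  have hsupphS : Supp h ⊆ S := closure_minimal (fun z hz => hsupph z hz) hScl
  have hsuppfS : Supp f ⊆ S := closure_minimal (fun z hz => hsuppf z hz) hScl
  have hdisj : Disjoint (Supp (f * (u*f*u⁻¹) * f⁻¹)) (Supp (v*f*v⁻¹)) := by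
    have e1 : Supp (f * (u*f*u⁻¹) * f⁻¹) = f '' (u '' (Supp f)) := by
      rw [supp_conj f (u*f*u⁻¹), supp_conj u f]
    rw [e1, supp_conj v f]
    rw [Set.disjoint_left]
    rintro z ⟨w, ⟨b, hbS, rfl⟩, rfl⟩ ⟨b', hb'S, hb'⟩
    have hb1 : |b| ≤ M := hSM _ (hsuppfS hbS)
    have hub : dist (u b) x₁ < min δh δf := by
      rw [Real.dist_eq]
      have := hplace b hb1
      rw [hu, aff_app]
      exact this
    have h2 := hδf _ (lt_of_lt_of_le hub (min_le_right _ _))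
    rw [Real.dist_eq] at h2
    have h3 := hvS b' (hsuppfS hb'S)
    rw [hb'] at h3
    linarith
  have hcomm := hTβ l₁ s₁ l₂ s₂ hl₁pos hl₂pos hdyl₁ hdys₁ hdyl₂ hdys₂ hdisj
  set g₁ := h * (u*h*u⁻¹) * h⁻¹ with hg₁
  set W₂ := v*h*v⁻¹ with hW₂
  have hg₁ne : g₁ ≠ 1 := by
    intro hc
    have h1 : u*h*u⁻¹ = 1 := by
      have h2 : h⁻¹ * (h * (u*h*u⁻¹) * h⁻¹) * h = h⁻¹ * 1 * h := by rw [← hg₁, hc]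
      calc u*h*u⁻¹ = h⁻¹ * (h * (u*h*u⁻¹) * h⁻¹) * h := by group
        _ = h⁻¹ * 1 * h := h2
        _ = 1 := by group
    have h2 : h = 1 := by
      calc h = u⁻¹ * (u*h*u⁻¹) * u := by group
        _ = u⁻¹ * 1 * u := by rw [h1]
        _ = 1 := by group
    have h3 : x₁ < (1:HH) x₁ := by
      rw [← h2, ← hy]
      exact hx₁up
    rw [one_app] at h3
    exact lt_irrefl _ h3
  have hSuppg₁ : ∀ w ∈ Supp g₁, |w - y| ≤ l₂*d/8 := by
    intro w hw
    rw [hg₁, supp_conj h (u*h*u⁻¹), supp_conj u h] at hw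
    obtain ⟨w', ⟨z, hz, rfl⟩, rfl⟩ := hw
    have hz1 : |z| ≤ M := hSM _ (hsupphS hz)
    have h1 : dist (u z) x₁ < min δh δf := by
      rw [Real.dist_eq]
      have := hplace z hz1
      rw [hu, aff_app]
      exact this
    have h2 := hδh _ (lt_of_lt_of_le h1 (min_le_left _ _))
    rw [Real.dist_eq] at h2
    exact le_of_lt h2
  refine certificate (g₁ := g₁) (g₂ := W₂) hg₁ne hcomm ?_
  rw [Set.disjoint_left]
  rintro z ⟨w, hw, rfl⟩ hz2
  have h1 := hSuppg₁ w hw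
  have h2 := hSuppg₁ _ hz2
  have hw1 : x₁ < v⁻¹ w := by
    rw [lt_inv_app hvm]
    have := (abs_le.1 h1).1
    linarith
  have hw2 : y < h (v⁻¹ w) := by
    calc y = h x₁ := hy
      _ < h (v⁻¹ w) := hhm hw1
  have hw3 : v y < W₂ w := by
    have h4 := hvm hw2
    have e : W₂ w = v (h (v⁻¹ w)) := conj_app v h w
    rw [e]
    exact h4
  have h5 := (abs_le.1 h2).2
  linarith

end BSRF
namespace BSRF
open BSR BSRB BSRC BSRD Set

lemma comm_inv_right {g k : HH} (h : g * k = k * g) : g * k⁻¹ = k⁻¹ * g := by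
  calc g * k⁻¹ = k⁻¹ * (k * g) * k⁻¹ := by group
    _ = k⁻¹ * (g * k) * k⁻¹ := by rw [h]
    _ = k⁻¹ * g := by group

lemma conj_inv_eq (u g : HH) : (u * g * u⁻¹)⁻¹ = u * g⁻¹ * u⁻¹ := by group

lemma adm_far (S : Set ℝ) (M l s : ℝ) (hSM : ∀ b ∈ S, |b| ≤ M) (hl : 0 < l)
    (hfar : (l+1)*M < |s|) : ∀ b ∈ S, l*b + s ∉ S := by
  intro b hb hmem
  have h1 := hSM b hb
  have h2 := hSM _ hmem
  have h3 : |s| ≤ |l*b+s| + |l*b| := by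
    have e : s = (l*b+s) + (-(l*b)) := by ring
    calc |s| = |(l*b+s) + (-(l*b))| := by rw [← e]
      _ ≤ |l*b+s| + |(-(l*b))| := abs_add_le _ _
      _ = |l*b+s| + |l*b| := by rw [abs_neg]
  have h4 : |l*b| ≤ l*M := by
    rw [abs_mul, abs_of_pos hl]
    nlinarith
  nlinarith

lemma tri_lemma (n : ℕ) (hn : 2 ≤ n) (f h : HH)
    (hhmono : StrictMono h)
    (φ : Subgroup.closure ((BSgroup n hn : Set HH) ∪ {f}) →* HH)
    (hφΓ : ∀ (γ : HH) (hγ : γ ∈ BSgroup n hn),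
      φ ⟨γ, Subgroup.subset_closure (Set.mem_union_left _ hγ)⟩ = γ)
    (hφf : φ ⟨f, Subgroup.subset_closure
        (Set.mem_union_right _ (Set.mem_singleton f))⟩ = h)
    (M : ℝ) (hM : 0 < M) (hSM : ∀ b ∈ Supp f, |b| ≤ M)
    (k : HH) (hkm : StrictMono k) (hkfpf : ∀ x, x < k x)
    (hkcomm : ∀ g : HH, g * h = h * g → g * k = k * g)
    (l s : ℝ) (hl : 0 < l) (hdyl : DyL n l) (hdys : Dy n s) (hfar : (l+1)*M < |s|) :
    (aff l s hl * h * (aff l s hl)⁻¹ = h) ∨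
    (∀ x, h x < (aff l s hl * h * (aff l s hl)⁻¹) x) ∨
    (∀ x, (aff l s hl * h * (aff l s hl)⁻¹) x < h x) := by
  obtain ⟨j, rfl⟩ := hdyl
  obtain ⟨p, m, rfl⟩ := hdys
  have hScl : IsClosed (Supp f) := isClosed_supp f
  have hadm := adm_far (Supp f) M _ _ hSM hl hfar
  set u := aff ((n:ℝ)^j) ((p:ℝ)/(n:ℝ)^m) hl with hu
  have humem : u ∈ BSgroup n hn := aff_mem n hn j p m hl
  have humono : StrictMono u := aff_strictMono _ _ _
  set W := u * h * u⁻¹ with hW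
  set ge := h⁻¹ * W with hge
  have hgemono : StrictMono ⇑ge := by
    intro a b hab
    rw [hge, mul_app, mul_app]
    exact (strictMono_inv hhmono) ((conj_strictMono u h humono hhmono) hab)
  set B := Supp f ∪ u '' (Supp f) with hB
  have hBcl : IsClosed B := hScl.union (u.isClosedMap _ hScl)
  set l' := ((n:ℝ)^j)
  set s' := ((p:ℝ)/(n:ℝ)^m)
  set RB := l' * M + |s'| + M with hRB
  have hRBpos : 0 < RB := by
    have := abs_nonneg s'
    nlinarith
  have hBsub : ∀ b ∈ B, |b| ≤ RB := by
    intro b hb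
    rcases hb with hb | ⟨b', hb', rfl⟩
    · have := hSM b hb
      have habs := abs_nonneg s'
      nlinarith
    · have h1 := hSM b' hb'
      have e : u b' = l' * b' + s' := aff_app _ _ _ _
      rw [e]
      calc |l' * b' + s'| ≤ |l' * b'| + |s'| := abs_add_le _ _
        _ = l' * |b'| + |s'| := by rw [abs_mul, abs_of_pos hl]
        _ ≤ RB := by nlinarith
  have hsuppe : Supp (f⁻¹ * (u*f*u⁻¹)) ⊆ B := by
    refine subset_trans (supp_mul_subset _ _) ?_
    rw [supp_inv, supp_conj]
  have hCHe : CommHyp n B ge := by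
    intro l₂ s₂ hl₂ e1 e2 hadm₂
    obtain ⟨j₂, rfl⟩ := e1
    obtain ⟨p₂, m₂, rfl⟩ := e2
    rw [hge, hW]
    refine transfer_T3 hφΓ hφf _ _ humem (aff_mem n hn j₂ p₂ m₂ hl₂) ?_
    refine commute_of_disjoint_supp ?_
    rw [supp_conj (aff _ _ hl₂) _]
    rw [Set.disjoint_left]
    rintro z hz1 ⟨z', hz', rfl⟩
    have hzB := hsuppe hz1
    have hz'B := hsuppe hz'
    have h5 := hadm₂ z' hz'B
    exact h5 ((aff_app _ _ hl₂ z') ▸ hzB)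
  rcases meta_dichotomy n hn RB hRBpos B hBcl hBsub ge hgemono hCHe with h1 | h2
  · left
    have hcfd : f * (u*f*u⁻¹) = (u*f*u⁻¹) * f := by
      refine commute_of_disjoint_supp ?_
      rw [supp_conj u f]
      rw [Set.disjoint_left]
      rintro z hz1 ⟨z', hz', rfl⟩
      have h5 := hadm z' hz'
      exact h5 ((aff_app _ _ hl z') ▸ hz1)
    have hcomm_ef : ge * h = h * ge := by
      rw [hge, hW]
      refine transfer_Tef hφΓ hφf _ humem ?_
      calc (f⁻¹*(u*f*u⁻¹)) * f = f⁻¹ * ((u*f*u⁻¹) * f) := by group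
        _ = f⁻¹ * (f * (u*f*u⁻¹)) := by rw [← hcfd]
        _ = f * (f⁻¹*(u*f*u⁻¹)) := by group
    have hsuppge : Supp ge ⊆ B := by
      rw [supp_def]
      refine closure_minimal ?_ hBcl
      intro z hz
      by_contra hc
      exact hz (h1 z hc)
    have hgsupp : ∀ yy ∈ Supp ge, |yy| ≤ RB := fun yy hyy => hBsub _ (hsuppge hyy)
    have hge1 : ge = 1 :=
      eq_one_of_comm_fpf ge k hkm (hkcomm ge hcomm_ef) hkfpf RB hgsupp
    rw [hge] at hge1
    calc u * h * u⁻¹ = h * (h⁻¹ * (u * h * u⁻¹)) := by group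
      _ = h * 1 := by rw [← hW, hge1]
      _ = h := by group
  · have hne : ∀ x, W x ≠ h x := by
      intro x hc
      apply h2 x
      rw [hge, mul_app, hc, inv_apply_apply]
    have hcont : Continuous (fun x => W x - h x) := W.continuous.sub h.continuous
    rcases sign_const hcont (fun x => sub_ne_zero.2 (hne x)) with hpos | hneg
    · right; left
      intro x
      have := hpos x
      linarith
    · right; right
      intro x
      have := hneg x
      linarith

end BSRF
namespace BSRD
open BSR BSRB Set

lemma transfer_Tbeta_inv {n : ℕ} {hn : 2 ≤ n} {f h : HH}
    {φ : Subgroup.closure ((BSgroup n hn : Set HH) ∪ {f}) →* HH}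
    (hφΓ : ∀ (γ : HH) (hγ : γ ∈ BSgroup n hn),
      φ ⟨γ, Subgroup.subset_closure (Set.mem_union_left _ hγ)⟩ = γ)
    (hφf : φ ⟨f, Subgroup.subset_closure
        (Set.mem_union_right _ (Set.mem_singleton f))⟩ = h)
    (u v : HH) (hu : u ∈ BSgroup n hn) (hv : v ∈ BSgroup n hn)
    (hd : (f⁻¹*(u*f⁻¹*u⁻¹)*(f⁻¹)⁻¹) * (v*f⁻¹*v⁻¹)
        = (v*f⁻¹*v⁻¹) * (f⁻¹*(u*f⁻¹*u⁻¹)*(f⁻¹)⁻¹)) :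
    (h⁻¹*(u*h⁻¹*u⁻¹)*(h⁻¹)⁻¹) * (v*h⁻¹*v⁻¹)
        = (v*h⁻¹*v⁻¹) * (h⁻¹*(u*h⁻¹*u⁻¹)*(h⁻¹)⁻¹) := by
  have hK : ((Fe n hn f)⁻¹*((Ge n hn f u hu)*(Fe n hn f)⁻¹*(Ge n hn f u hu)⁻¹)*((Fe n hn f)⁻¹)⁻¹)
        * ((Ge n hn f v hv)*(Fe n hn f)⁻¹*(Ge n hn f v hv)⁻¹)
      = ((Ge n hn f v hv)*(Fe n hn f)⁻¹*(Ge n hn f v hv)⁻¹)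
        * ((Fe n hn f)⁻¹*((Ge n hn f u hu)*(Fe n hn f)⁻¹*(Ge n hn f u hu)⁻¹)*((Fe n hn f)⁻¹)⁻¹) :=
    Subtype.ext hd
  have h2 := congrArg φ hK
  simp only [map_mul, map_inv, Fe, Ge] at h2
  rw [hφΓ u hu, hφΓ v hv, hφf] at h2
  exact h2

end BSRD

namespace BSRF
open BSR BSRB BSRC BSRD BSRE Set

lemma fpf_wrap (n : ℕ) (hn : 2 ≤ n) (M : ℝ) (hM : 0 < M) (H : HH)
    (hfpf : ∀ x, x < H x)
    (htriA : ∀ s : ℝ, Dy n s → 2*M < |s| →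
        (∀ x, H (x-s) + s = H x) ∨ (∀ x, H x < H (x-s) + s) ∨ (∀ x, H (x-s) + s < H x))
    (htriB : ∀ s : ℝ, Dy n s → ((n:ℝ)+1)*M < |s| →
        (∀ x, (n:ℝ) * H ((x-s)/(n:ℝ)) + s = H x) ∨
        (∀ x, H x < (n:ℝ) * H ((x-s)/(n:ℝ)) + s) ∨
        (∀ x, (n:ℝ) * H ((x-s)/(n:ℝ)) + s < H x))
    (hcomm1 : ∀ s : ℝ, Dy n s → 2*M < |s| → ∀ x, H (H (x-s) + s) = H (H x - s) + s) :
    ∃ t : ℝ, ∀ x, H x = x + t := by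
  have hn2 : (2:ℝ) ≤ (n:ℝ) := by exact_mod_cast hn
  have hnR : (0:ℝ) < (n:ℝ) := by linarith
  set U : ℝ → ℝ := fun x => H x - x with hUdef
  have hUapp : ∀ t : ℝ, U t = H t - t := fun _ => rfl
  have hUc : Continuous U := H.continuous.sub continuous_id
  have hUpos : ∀ x, 0 < U x := fun x => by rw [hUapp]; linarith [hfpf x]
  have tri1U : ∀ s : ℝ, Dy n s → 2*M < |s| →
      (∀ x, U (x - s) = U x) ∨ (∀ x, U x < U (x-s)) ∨ (∀ x, U (x-s) < U x) := by
    intro s d2 hs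
    rcases htriA s d2 hs with hE | hL | hG
    · left
      intro x
      have h1 := hE x
      rw [hUapp, hUapp]
      linarith
    · right; left
      intro x
      have h1 := hL x
      rw [hUapp, hUapp]
      linarith
    · right; right
      intro x
      have h1 := hG x
      rw [hUapp, hUapp]
      linarith
  have hSN : ∀ s : ℝ, Dy n s → ((n:ℝ)+1)*M < |s| →
      ∀ x, U x < (n:ℝ) * U ((x-s)/(n:ℝ)) := by
    intro s d2 hs
    rcases htriB s d2 hs with hE | hL | hG
    · exfalso
      set z := s / (1 - (n:ℝ)) with hz
      have hne1 : (1:ℝ) - (n:ℝ) ≠ 0 := by linarith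
      have hz1 : (z - s)/(n:ℝ) = z := by
        rw [hz]
        field_simp
        ring
      have h1 := hE z
      rw [hz1] at h1
      have hHz : H z = z := by
        rw [hz, eq_div_iff hne1]
        linarith
      exact absurd hHz (ne_of_gt (hfpf z))
    · intro x
      have h1 := hL x
      rw [hUapp, hUapp]
      have harg : (n:ℝ) * ((x-s)/(n:ℝ)) = x - s := mul_div_cancel₀ _ (ne_of_gt hnR)
      rw [mul_sub, harg]
      linarith
    · exfalso
      set z := s / (1 - (n:ℝ)) with hz
      have hne1 : (1:ℝ) - (n:ℝ) ≠ 0 := by linarith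
      have hz1 : (z - s)/(n:ℝ) = z := by
        rw [hz]
        field_simp
        ring
      have h1 := hG z
      rw [hz1] at h1
      have hzz : z * (1 - (n:ℝ)) = s := by
        rw [hz]
        field_simp
      have h5 : ((n:ℝ) - 1) * (H z) < ((n:ℝ) - 1) * z := by nlinarith [hzz, h1]
      have h6 : H z < z := (mul_lt_mul_iff_right₀ (by linarith : (0:ℝ) < (n:ℝ) - 1)).1 h5
      linarith [hfpf z]
  have commU : ∀ s : ℝ, Dy n s → 2*M < |s| →
      ∀ x, U (x-s) + U (x + U (x-s)) = U x + U (x + U x - s) := by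
    intro s d2 hs x
    have h1 := hcomm1 s d2 hs x
    simp only [hUapp]
    have e1 : x + (H (x-s) - (x-s)) = H (x-s) + s := by ring
    have e2 : x + (H x - x) - s = H x - s := by ring
    rw [e1, e2]
    linarith
  have hconst := fpf_core n hn M hM U hUc hUpos tri1U hSN commU
  refine ⟨U 0, fun x => ?_⟩
  have h1 := hconst x 0
  rw [hUapp, hUapp] at h1
  rw [hUapp]
  linarith

end BSRF
open BSR BSRB BSRC BSRD BSRE BSRF Set

theorem BS_hom_recognition
    (n : ℕ) (hn : 2 ≤ n) (f h : ℝ ≃ₜ ℝ)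
    (hfmono : StrictMono f) (hhmono : StrictMono h)
    (hfc : IsCompact (Supp f))
    (φ : Subgroup.closure ((BSgroup n hn : Set (ℝ ≃ₜ ℝ)) ∪ {f}) →* (ℝ ≃ₜ ℝ))
    (hφmono : ∀ g, StrictMono (φ g))
    (hφΓ : ∀ (γ : ℝ ≃ₜ ℝ) (hγ : γ ∈ BSgroup n hn),
      φ ⟨γ, Subgroup.subset_closure (Set.mem_union_left _ hγ)⟩ = γ)
    (hφf : φ ⟨f, Subgroup.subset_closure
        (Set.mem_union_right _ (Set.mem_singleton f))⟩ = h) :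
    (∃ t : ℝ, ∀ x : ℝ, h x = x + t) ∨ (∀ x : ℝ, h x = x ∨ h x = f x) := by
  classical
  have hScl : IsClosed (Supp f) := isClosed_supp f
  obtain ⟨M₀, hM₀⟩ := hfc.isBounded.subset_closedBall 0
  set M := max M₀ 1 with hMdef
  have hM : 0 < M := lt_of_lt_of_le one_pos (le_max_right _ _)
  have hSM : ∀ b ∈ Supp f, |b| ≤ M := by
    intro b hb
    have h1 := hM₀ hb
    rw [Metric.mem_closedBall, Real.dist_eq, sub_zero] at h1
    exact le_trans h1 (le_max_left _ _)
  have hCH : CommHyp n (Supp f) h := by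
    intro l s hl hdyl hdys hadm
    obtain ⟨j, rfl⟩ := hdyl
    obtain ⟨p, m, rfl⟩ := hdys
    refine transfer_T0 hφΓ hφf _ (aff_mem n hn j p m hl) ?_
    refine commute_of_disjoint_supp ?_
    rw [supp_conj]
    rw [Set.disjoint_left]
    rintro z hz1 ⟨z', hz', rfl⟩
    exact (hadm z' hz') ((aff_app _ _ hl z') ▸ hz1)
  by_cases hfixe : ∃ q : ℝ, h q = q
  · -- mixture case
    obtain ⟨q, hq⟩ := hfixe
    right
    have hoff : ∀ x, x ∉ Supp f → h x = x := by
      rcases meta_dichotomy n hn M hM (Supp f) hScl hSM h hhmono hCH with h1 | h2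
      · exact h1
      · exact absurd hq (h2 q)
    have hsupph : ∀ z : ℝ, h z ≠ z → z ∈ Supp f := by
      intro z hz
      by_contra hc
      exact hz (hoff z hc)
    have hsuppf : ∀ z : ℝ, f z ≠ z → z ∈ Supp f := fun z hz => subset_closure hz
    intro x
    by_contra hbad
    push_neg at hbad
    obtain ⟨hbx, hbf⟩ := hbad
    rcases lt_or_gt_of_ne hbx with hlt | hgt
    · -- h x < x : work with inverses at the point h x
      have hsupph' : ∀ z : ℝ, (h⁻¹ : HH) z ≠ z → z ∈ Supp f := by
        intro z hz
        exact hsupph z fun hc => hz (inv_fix hc)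
      have hsuppf' : ∀ z : ℝ, (f⁻¹ : HH) z ≠ z → z ∈ Supp f := by
        intro z hz
        exact hsuppf z fun hc => hz (inv_fix hc)
      refine beta_point n hn f⁻¹ h⁻¹ (strictMono_inv hfmono) (strictMono_inv hhmono)
        M hM (Supp f) hScl hSM hsupph' hsuppf' ?_ (h x) ?_ ?_
      · intro l₁ s₁ l₂ s₂ hl₁ hl₂ d₁ d₂ d₃ d₄ hdisj
        obtain ⟨j₁, rfl⟩ := d₁
        obtain ⟨p₁, m₁, rfl⟩ := d₂
        obtain ⟨j₂, rfl⟩ := d₃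
        obtain ⟨p₂, m₂, rfl⟩ := d₄
        exact transfer_Tbeta_inv hφΓ hφf _ _ (aff_mem n hn j₁ p₁ m₁ hl₁)
          (aff_mem n hn j₂ p₂ m₂ hl₂) (commute_of_disjoint_supp hdisj)
      · rw [inv_apply_apply]
        exact hlt
      · rw [inv_apply_apply]
        intro hc
        apply hbf
        have h2 := congrArg f hc
        rw [apply_inv_apply] at h2
        exact h2.symm
    · refine beta_point n hn f h hfmono hhmono M hM (Supp f) hScl hSM hsupph hsuppf
        ?_ x hgt hbf
      intro l₁ s₁ l₂ s₂ hl₁ hl₂ d₁ d₂ d₃ d₄ hdisj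
      obtain ⟨j₁, rfl⟩ := d₁
      obtain ⟨p₁, m₁, rfl⟩ := d₂
      obtain ⟨j₂, rfl⟩ := d₃
      obtain ⟨p₂, m₂, rfl⟩ := d₄
      exact transfer_Tbeta hφΓ hφf _ _ (aff_mem n hn j₁ p₁ m₁ hl₁)
        (aff_mem n hn j₂ p₂ m₂ hl₂) (commute_of_disjoint_supp hdisj)
  · -- translation case
    left
    push_neg at hfixe
    have hd0 := sign_const (d := fun x => h x - x) (h.continuous.sub continuous_id)
      (fun x => sub_ne_zero.2 (hfixe x))
    have hconjapp : ∀ (l s : ℝ) (hl : 0 < l) (x : ℝ),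
        (aff l s hl * h * (aff l s hl)⁻¹) x = l * h ((x - s)/l) + s := by
      intro l s hl x
      rw [conj_app, aff_inv_app, aff_app]
    have hconjappi : ∀ (l s : ℝ) (hl : 0 < l) (x : ℝ),
        (aff l s hl * h⁻¹ * (aff l s hl)⁻¹) x = l * (h⁻¹ : HH) ((x - s)/l) + s := by
      intro l s hl x
      rw [conj_app, aff_inv_app, aff_app]
    have hcommG : ∀ (l s : ℝ) (hl : 0 < l), DyL n l → Dy n s → (l+1)*M < |s| →
        h * (aff l s hl * h * (aff l s hl)⁻¹) = (aff l s hl * h * (aff l s hl)⁻¹) * h := by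
      intro l s hl d1 d2 hfar
      exact hCH l s hl d1 d2 (adm_far (Supp f) M l s hSM hl hfar)
    rcases hd0 with hup | hdown
    · -- h strictly above the identity
      have hfpf : ∀ x, x < h x := fun x => by
        have h2 : 0 < h x - x := hup x
        linarith
      have htri := fun (l s : ℝ) (hl : 0 < l) d1 d2 hfar =>
        tri_lemma n hn f h hhmono φ hφΓ hφf M hM hSM h hhmono hfpf
          (fun g hg => hg) l s hl d1 d2 hfar
      have htriA : ∀ s : ℝ, Dy n s → 2*M < |s| →
          (∀ x, h (x-s) + s = h x) ∨ (∀ x, h x < h (x-s) + s) ∨ (∀ x, h (x-s) + s < h x) := by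
        intro s d2 hs
        have hfar : ((1:ℝ)+1)*M < |s| := by linarith
        rcases htri 1 s one_pos dyL_one d2 hfar with hE | hL | hG
        · left
          intro x
          have h1 := ext_iff'.1 hE x
          rw [hconjapp, div_one, one_mul] at h1
          exact h1
        · right; left
          intro x
          have h1 := hL x
          rw [hconjapp, div_one, one_mul] at h1
          exact h1
        · right; right
          intro x
          have h1 := hG x
          rw [hconjapp, div_one, one_mul] at h1
          exact h1
      have htriB : ∀ s : ℝ, Dy n s → ((n:ℝ)+1)*M < |s| →
          (∀ x, (n:ℝ) * h ((x-s)/(n:ℝ)) + s = h x) ∨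
          (∀ x, h x < (n:ℝ) * h ((x-s)/(n:ℝ)) + s) ∨
          (∀ x, (n:ℝ) * h ((x-s)/(n:ℝ)) + s < h x) := by
        intro s d2 hs
        rcases htri (n:ℝ) s (n_pos hn) (dyL_n hn) d2 hs with hE | hL | hG
        · left
          intro x
          have h1 := ext_iff'.1 hE x
          rw [hconjapp] at h1
          exact h1
        · right; left
          intro x
          have h1 := hL x
          rw [hconjapp] at h1
          exact h1
        · right; right
          intro x
          have h1 := hG x
          rw [hconjapp] at h1
          exact h1
      have hcomm1 : ∀ s : ℝ, Dy n s → 2*M < |s| →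
          ∀ x, h (h (x-s) + s) = h (h x - s) + s := by
        intro s d2 hs x
        have hfar : ((1:ℝ)+1)*M < |s| := by linarith
        have hcg := hcommG 1 s one_pos dyL_one d2 hfar
        have h1 := pcomm_of_mul_eq hcg x
        rw [hconjapp, hconjapp, div_one, div_one, one_mul, one_mul] at h1
        exact h1
      exact fpf_wrap n hn M hM h hfpf htriA htriB hcomm1
    · -- h strictly below the identity: use h⁻¹
      have hfpf : ∀ x, x < (h⁻¹ : HH) x := by
        intro x
        have h2 : h x < x := by
          have h3 : h x - x < 0 := hdown x
          linarith
        have h3 := (strictMono_inv hhmono) h2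
        rwa [inv_apply_apply] at h3
      have htri := fun (l s : ℝ) (hl : 0 < l) d1 d2 hfar =>
        tri_lemma n hn f h hhmono φ hφΓ hφf M hM hSM h⁻¹ (strictMono_inv hhmono) hfpf
          (fun g hg => comm_inv_right hg) l s hl d1 d2 hfar
      have htriI : ∀ (l s : ℝ) (hl : 0 < l), DyL n l → Dy n s → (l+1)*M < |s| →
          (aff l s hl * h⁻¹ * (aff l s hl)⁻¹ = h⁻¹) ∨
          (∀ x, (h⁻¹:HH) x < (aff l s hl * h⁻¹ * (aff l s hl)⁻¹) x) ∨
          (∀ x, (aff l s hl * h⁻¹ * (aff l s hl)⁻¹) x < (h⁻¹:HH) x) := by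
        intro l s hl d1 d2 hfar
        have hWmono : StrictMono ⇑(aff l s hl * h * (aff l s hl)⁻¹) :=
          conj_strictMono _ _ (aff_strictMono _ _ _) hhmono
        rcases htri l s hl d1 d2 hfar with hE | hL | hG
        · left
          rw [← conj_inv_eq, hE]
        · right; right
          intro x
          have h5 := inv_lt_pointwise hhmono hL x
          rw [← conj_inv_eq]
          exact h5
        · right; left
          intro x
          have h5 := inv_lt_pointwise hWmono hG x
          rw [← conj_inv_eq]
          exact h5
      have htriA : ∀ s : ℝ, Dy n s → 2*M < |s| →
          (∀ x, (h⁻¹:HH) (x-s) + s = (h⁻¹:HH) x) ∨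
          (∀ x, (h⁻¹:HH) x < (h⁻¹:HH) (x-s) + s) ∨
          (∀ x, (h⁻¹:HH) (x-s) + s < (h⁻¹:HH) x) := by
        intro s d2 hs
        have hfar : ((1:ℝ)+1)*M < |s| := by linarith
        rcases htriI 1 s one_pos dyL_one d2 hfar with hE | hL | hG
        · left
          intro x
          have h1 := ext_iff'.1 hE x
          rw [hconjappi, div_one, one_mul] at h1
          exact h1
        · right; left
          intro x
          have h1 := hL x
          rw [hconjappi, div_one, one_mul] at h1
          exact h1
        · right; right
          intro x
          have h1 := hG x
          rw [hconjappi, div_one, one_mul] at h1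
          exact h1
      have htriB : ∀ s : ℝ, Dy n s → ((n:ℝ)+1)*M < |s| →
          (∀ x, (n:ℝ) * (h⁻¹:HH) ((x-s)/(n:ℝ)) + s = (h⁻¹:HH) x) ∨
          (∀ x, (h⁻¹:HH) x < (n:ℝ) * (h⁻¹:HH) ((x-s)/(n:ℝ)) + s) ∨
          (∀ x, (n:ℝ) * (h⁻¹:HH) ((x-s)/(n:ℝ)) + s < (h⁻¹:HH) x) := by
        intro s d2 hs
        rcases htriI (n:ℝ) s (n_pos hn) (dyL_n hn) d2 hs with hE | hL | hG
        · left
          intro x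
          have h1 := ext_iff'.1 hE x
          rw [hconjappi] at h1
          exact h1
        · right; left
          intro x
          have h1 := hL x
          rw [hconjappi] at h1
          exact h1
        · right; right
          intro x
          have h1 := hG x
          rw [hconjappi] at h1
          exact h1
      have hcomm1 : ∀ s : ℝ, Dy n s → 2*M < |s| →
          ∀ x, (h⁻¹:HH) ((h⁻¹:HH) (x-s) + s) = (h⁻¹:HH) ((h⁻¹:HH) x - s) + s := by
        intro s d2 hs x
        have hfar : ((1:ℝ)+1)*M < |s| := by linarith
        have hcg := comm_conj_inv (hcommG 1 s one_pos dyL_one d2 hfar)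
        have h1 := pcomm_of_mul_eq hcg x
        rw [hconjappi, hconjappi, div_one, div_one, one_mul, one_mul] at h1
        exact h1
      obtain ⟨t, ht⟩ := fpf_wrap n hn M hM h⁻¹ hfpf htriA htriB hcomm1
      refine ⟨-t, fun x => ?_⟩
      have h1 := ht (h x)
      rw [inv_apply_apply] at h1
      linarith
end

section
/- Fix an integer n ≥ 2. Let h ∈ Homeo₊(ℝ) and suppose there exists a compact set K ⊆ ℝ such that h commutes with u ∘ h ∘ u⁻¹ for every u ∈ BS(1,n) with u(K) ∩ K = ∅. Suppose there exists a real number t₀ ≠ 0 such that either h(x) = x + t₀ for all sufficiently large x (i.e. there is C with h(x) = x + t₀ for all x ≥ C), or h(x) = x + t₀ for all sufficiently negative x. Then h(x) = x + t₀ for every x ∈ ℝ. -/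
open Set Topology

lemma translation_apply' (t x : ℝ) : translation t x = x + t := rfl

lemma translation_inv' (t : ℝ) : (translation t)⁻¹ = translation (-t) :=
  Homeomorph.ext fun x => sub_eq_add_neg x t

lemma translation_mul' (s t : ℝ) : translation s * translation t = translation (t + s) :=
  Homeomorph.ext fun x => add_assoc x t s

lemma translation_one' : (1 : ℝ ≃ₜ ℝ) = translation 0 :=
  Homeomorph.ext fun x => (add_zero x).symm

lemma translation_mem_BS (n : ℕ) (hn : 2 ≤ n) (k : ℤ) :
    translation (k : ℝ) ∈ BSgroup n hn := by
  have h1 : translation 1 ∈ BSgroup n hn :=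
    Subgroup.subset_closure (by simp)
  induction k using Int.induction_on with
  | zero =>
      rw [show ((0:ℤ):ℝ) = 0 by norm_num, ← translation_one']
      exact one_mem _
  | succ k ih =>
      have : translation ((k : ℝ) + 1) = translation 1 * translation (k : ℝ) := by
        rw [translation_mul']
      rw [show (((k:ℤ)+1 : ℤ) : ℝ) = (k : ℝ) + 1 by push_cast; ring, this]
      exact mul_mem h1 ih
  | pred k ih =>
      have : translation ((-(k:ℝ)) - 1) = (translation 1)⁻¹ * translation (-(k : ℝ)) := by
        rw [translation_inv', translation_mul']; ring_nf
      rw [show ((-(k:ℤ)-1 : ℤ) : ℝ) = (-(k : ℝ)) - 1 by push_cast; ring, this]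
      refine mul_mem (inv_mem h1) ?_
      push_cast at ih
      exact ih

theorem translation_germ_implies_translation
    (n : ℕ) (hn : 2 ≤ n) (h : ℝ ≃ₜ ℝ) (hhmono : StrictMono h)
    (hK : ∃ K : Set ℝ, IsCompact K ∧
      ∀ u ∈ BSgroup n hn, (u '' K) ∩ K = ∅ → Commute h (u * h * u⁻¹))
    (t₀ : ℝ) (ht₀ : t₀ ≠ 0)
    (hgerm : (∃ C : ℝ, ∀ x : ℝ, C ≤ x → h x = x + t₀) ∨
             (∃ C : ℝ, ∀ x : ℝ, x ≤ C → h x = x + t₀)) :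
    ∀ x : ℝ, h x = x + t₀ := by
  obtain ⟨K, hKc, hcomm⟩ := hK
  obtain ⟨R, hKR⟩ : ∃ R : ℝ, K ⊆ Metric.closedBall 0 R :=
    hKc.isBounded.subset_closedBall 0
  -- key: for |m| > 2|R|, conjugation commutation pointwise
  have key : ∀ m : ℤ, 2 * |R| < |(m : ℝ)| →
      ∀ x : ℝ, h (h (x - (m:ℝ)) + (m:ℝ)) = h (h x - (m:ℝ)) + (m:ℝ) := by
    intro m hm x
    have hdisj : (translation (m:ℝ) '' K) ∩ K = ∅ := by
      rw [Set.eq_empty_iff_forall_notMem]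
      rintro y ⟨⟨z, hzK, hzy⟩, hyK⟩
      have hz : |z| ≤ R := by simpa [Real.norm_eq_abs] using hKR hzK
      have hy : |y| ≤ R := by simpa [Real.norm_eq_abs] using hKR hyK
      have : (m : ℝ) = y - z := by rw [← hzy, translation_apply']; ring
      have : |(m:ℝ)| ≤ 2 * |R| := by
        rw [this]
        calc |y - z| ≤ |y| + |z| := abs_sub _ _
          _ ≤ |R| + |R| := add_le_add (hy.trans (le_abs_self R)) (hz.trans (le_abs_self R))
          _ = 2 * |R| := by ring
      linarith
    have hc := hcomm (translation (m:ℝ)) (translation_mem_BS n hn m) hdisj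
    have := DFunLike.congr_fun hc x
    have e1 : (h * (translation (m:ℝ) * h * (translation (m:ℝ))⁻¹)) x
        = h (h (x - (m:ℝ)) + (m:ℝ)) := rfl
    have e2 : ((translation (m:ℝ) * h * (translation (m:ℝ))⁻¹) * h) x
        = h (h x - (m:ℝ)) + (m:ℝ) := rfl
    rw [e1, e2] at this
    exact this
  -- step lemma: h (x + t₀) = h x + t₀ everywhere
  have step : ∀ x : ℝ, h (x + t₀) = h x + t₀ := by
    intro x
    rcases hgerm with ⟨C, hC⟩ | ⟨C, hC⟩
    · -- germ at +∞ : choose m very negative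
      obtain ⟨m, hm⟩ := exists_int_lt (min (x - C) (min (h x - C) (-(2 * |R|) - 1)))
      have hm1 : (m:ℝ) ≤ x - C := le_of_lt (lt_of_lt_of_le hm (min_le_left _ _))
      have hm2 : (m:ℝ) ≤ h x - C :=
        le_of_lt (lt_of_lt_of_le hm ((min_le_right _ _).trans (min_le_left _ _)))
      have hm3 : (m:ℝ) < -(2*|R|) - 1 := lt_of_lt_of_le hm ((min_le_right _ _).trans (min_le_right _ _))
      have habs : 2 * |R| < |(m:ℝ)| := by
        have : (m:ℝ) < -(2*|R|) := by linarith
        calc 2*|R| < -(m:ℝ) := by linarith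
          _ ≤ |(m:ℝ)| := neg_le_abs _
      have hk := key m habs x
      rw [hC (x - m) (by linarith), hC (h x - m) (by linarith)] at hk
      have : h (x + t₀) = h x - (m:ℝ) + t₀ + (m:ℝ) := by
        rw [show x - (m:ℝ) + t₀ + (m:ℝ) = x + t₀ by ring] at hk
        exact hk
      linarith [this]
    · -- germ at -∞ : choose m very positive
      obtain ⟨m, hm⟩ := exists_int_gt (max (x - C) (max (h x - C) (2 * |R| + 1)))
      have hm1 : x - C ≤ (m:ℝ) := le_of_lt (lt_of_le_of_lt (le_max_left _ _) hm)
      have hm2 : h x - C ≤ (m:ℝ) :=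
        le_of_lt (lt_of_le_of_lt ((le_max_left _ _).trans (le_max_right _ _)) hm)
      have hm3 : 2 * |R| + 1 < (m:ℝ) := lt_of_le_of_lt ((le_max_right _ _).trans (le_max_right _ _)) hm
      have habs : 2 * |R| < |(m:ℝ)| := by
        calc 2*|R| < (m:ℝ) := by linarith
          _ ≤ |(m:ℝ)| := le_abs_self _
      have hk := key m habs x
      rw [hC (x - m) (by linarith), hC (h x - m) (by linarith)] at hk
      have : h (x + t₀) = h x - (m:ℝ) + t₀ + (m:ℝ) := by
        rw [show x - (m:ℝ) + t₀ + (m:ℝ) = x + t₀ by ring] at hk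
        exact hk
      linarith [this]
  -- propagate: h (x + k*t₀) = h x + k*t₀ for all k : ℤ
  have stepD : ∀ x : ℝ, h (x - t₀) = h x - t₀ := by
    intro x
    have := step (x - t₀)
    rw [show x - t₀ + t₀ = x by ring] at this
    linarith [this]
  have prop : ∀ k : ℤ, ∀ x : ℝ, h (x + (k:ℝ) * t₀) = h x + (k:ℝ) * t₀ := by
    intro k
    induction k using Int.induction_on with
    | zero => intro x; simp
    | succ k ih =>
        intro x
        have e : x + (((k : ℤ) + 1 : ℤ) : ℝ) * t₀ = (x + ((k : ℤ) : ℝ) * t₀) + t₀ := by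
          push_cast; ring
        rw [e, step, ih]
        push_cast; ring
    | pred k ih =>
        intro x
        have e : x + ((-(k : ℤ) - 1 : ℤ) : ℝ) * t₀ = (x + ((-(k : ℤ) : ℤ) : ℝ) * t₀) - t₀ := by
          push_cast; ring
        rw [e, stepD, ih]
        push_cast; ring
  -- finish
  intro x
  rcases hgerm with ⟨C, hC⟩ | ⟨C, hC⟩
  · obtain ⟨k, hk⟩ : ∃ k : ℤ, C ≤ x + (k:ℝ) * t₀ := by
      rcases lt_or_gt_of_ne ht₀ with hneg | hpos
      · obtain ⟨k, hk⟩ := exists_int_lt ((C - x) / t₀)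
        have h2 := mul_lt_mul_of_neg_right hk hneg
        rw [div_mul_cancel₀ _ ht₀] at h2
        exact ⟨k, by linarith⟩
      · obtain ⟨k, hk⟩ := exists_int_gt ((C - x) / t₀)
        have h2 := mul_lt_mul_of_pos_right hk hpos
        rw [div_mul_cancel₀ _ ht₀] at h2
        exact ⟨k, by linarith⟩
    have := prop k x
    rw [hC _ hk] at this
    linarith [this]
  · obtain ⟨k, hk⟩ : ∃ k : ℤ, x + (k:ℝ) * t₀ ≤ C := by
      rcases lt_or_gt_of_ne ht₀ with hneg | hpos
      · obtain ⟨k, hk⟩ := exists_int_gt ((C - x) / t₀)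
        have h2 := mul_lt_mul_of_neg_right hk hneg
        rw [div_mul_cancel₀ _ ht₀] at h2
        exact ⟨k, by linarith⟩
      · obtain ⟨k, hk⟩ := exists_int_lt ((C - x) / t₀)
        have h2 := mul_lt_mul_of_pos_right hk hpos
        rw [div_mul_cancel₀ _ ht₀] at h2
        exact ⟨k, by linarith⟩
    have := prop k x
    rw [hC _ hk] at this
    linarith [this]
end
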